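/- arXiv:math/0102080 — 4 statements merged into one kernel-verified Lean document; each statement's English description precedes it below -/
import Mathlib

section
/- For every complex number z with Re(z) ≥ 2 and every complex number ν with |Im(ν)| ≤ 1, one has Re(√(2z + ν²)) > |Re(ν)|, where the square root is taken with the principal branch of the logarithm. -/
open MeasureTheory ProbabilityTheory Set
open scoped ENNReal NNReal

noncomputable section

/-- `B` is a standard one-dimensional Brownian motion on the probability space `(Ω, μ)`:
measurable in `ω`, a.s. continuous paths, `B 0 = 0` a.s., Gaussian increments
`B t - B s ~ N(0, t - s)` for `0 ≤ s ≤ t`, and independent increments. -/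
def IsBrownianMotion {Ω : Type*} [MeasurableSpace Ω] (μ : Measure Ω) (B : ℝ → Ω → ℝ) : Prop :=
  IsProbabilityMeasure μ ∧
  (∀ t : ℝ, Measurable (B t)) ∧
  (∀ᵐ ω ∂μ, Continuous fun t => B t ω) ∧
  (∀ᵐ ω ∂μ, B 0 ω = 0) ∧
  (∀ s t : ℝ, 0 ≤ s → s ≤ t →
    μ.map (fun ω => B t ω - B s ω) = gaussianReal 0 ((t - s).toNNReal)) ∧
  (∀ (n : ℕ) (t : Fin (n + 1) → ℝ), (∀ i, 0 ≤ t i) → Monotone t →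
    iIndepFun
      (fun (i : Fin n) ω => B (t i.succ) ω - B (t i.castSucc) ω) μ)

/-- Yor's accumulation process `A_x^{(ν)} = ∫_0^x exp (2 (B_w + ν w)) dw`. -/
def yorA {Ω : Type*} (B : ℝ → Ω → ℝ) (ν x : ℝ) (ω : Ω) : ℝ :=
  ∫ w in Ioc (0 : ℝ) x, Real.exp (2 * (B w ω + ν * w))

/-- The modified Bessel function of the first kind, of complex order `μ`, at real `ξ`,
defined by its power series (powers via the principal branch). -/
def besselI (μ : ℂ) (ξ : ℝ) : ℂ :=
  ∑' n : ℕ, ((ξ : ℂ) / 2) ^ (μ + 2 * n) / ((n.factorial : ℂ) * Complex.Gamma (μ + n + 1))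

/-- The generalized Weber integral `D_ν(a, z)` of Carr–Schröder. -/
def Dnu (ν : ℂ) (a : ℝ) (z : ℂ) : ℂ :=
  Complex.exp (-(1 / (2 * a))) / a *
    ∫ x in Ioi (0 : ℝ),
      Complex.exp (-(x ^ 2 : ℝ) / (2 * a)) * (x : ℂ) ^ (ν + 3) *
        besselI ((2 * z + ν ^ 2) ^ (1 / 2 : ℂ)) (x / a)

/-- Kummer's confluent hypergeometric function `Φ(α, γ; w)`. -/
def kummerPhi (α γ w : ℂ) : ℂ :=
  ∑' n : ℕ, (ascPochhammer ℂ n).eval α / (ascPochhammer ℂ n).eval γ * w ^ n / n.factorial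

lemma re_cpow_half_pos {w : ℂ} (hw : 0 < w.re) : 0 < (w ^ (1/2 : ℂ)).re := by
  have hw0 : w ≠ 0 := by intro h; rw [h] at hw; simp at hw
  rw [Complex.cpow_def_of_ne_zero hw0, Complex.exp_re]
  have him : (Complex.log w * (1/2 : ℂ)).im = w.arg / 2 := by
    simp [Complex.log_im, Complex.mul_im, Complex.log_re]; ring
  rw [him]
  have harg : |w.arg| < Real.pi / 2 := Complex.abs_arg_lt_pi_div_two_iff.2 (Or.inl hw)
  have h2 : |w.arg / 2| < Real.pi / 2 := by
    rw [abs_div, abs_of_pos (show (0:ℝ) < 2 by norm_num)]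
    linarith [abs_nonneg w.arg]
  have := Real.cos_pos_of_mem_Ioo (Set.mem_Ioo.2 ⟨neg_lt_of_abs_lt h2, lt_of_abs_lt h2⟩)
  positivity

theorem stmt3 (z ν : ℂ) (hz : 2 ≤ z.re) (hν : |ν.im| ≤ 1) :
    |ν.re| < ((2 * z + ν ^ 2) ^ (1 / 2 : ℂ)).re := by
  set w := 2 * z + ν ^ 2 with hwdef
  have hwre : w.re = 2 * z.re + (ν.re ^ 2 - ν.im ^ 2) := by
    simp [hwdef, Complex.add_re, Complex.mul_re, pow_two, Complex.mul_im]
  have him2 : ν.im ^ 2 ≤ 1 := by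
    have := abs_nonneg ν.im
    nlinarith [_root_.sq_abs ν.im]
  have hwpos : ν.re ^ 2 < w.re := by rw [hwre]; nlinarith
  have hw0 : 0 < w.re := lt_of_le_of_lt (sq_nonneg _) hwpos
  set s := w ^ (1/2 : ℂ) with hsdef
  have hspos : 0 < s.re := re_cpow_half_pos hw0
  have hsq : s ^ 2 = w := by
    have : (1/2 : ℂ) = ((2:ℕ) : ℂ)⁻¹ := by norm_num
    rw [hsdef, this, Complex.cpow_nat_inv_pow _ two_ne_zero]
  have hre : s.re ^ 2 - s.im ^ 2 = w.re := by
    have := congrArg Complex.re hsq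
    simpa [pow_two, Complex.mul_re] using this
  rcases abs_cases ν.re with ⟨h, _⟩ | ⟨h, _⟩ <;> rw [h] <;>
    nlinarith [sq_nonneg s.im]

end
end

section
/- Let a > 0 be real, z a complex number with Re(z) ≥ 2, and ν a complex number with |Im(ν)| ≤ 1; set μ = √(2z+ν²) (principal branch). Then the integral D_ν(a, z) = (e^{−1/(2a)}/a) ∫_0^∞ e^{−x²/(2a)} x^{ν+3} I_μ(x/a) dx is absolutely convergent and equals Γ((ν+4+μ)/2) · (1/Γ(μ+1)) · Φ((ν+4+μ)/2, μ+1; 1/(2a)) · e^{−1/(2a)} · (2a)^{(ν+2−μ)/2}. -/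
open MeasureTheory ProbabilityTheory Set
open scoped ENNReal NNReal

noncomputable section

lemma gamma_ascPoch (s : ℂ) (hs : 0 < s.re) (n : ℕ) :
    Complex.Gamma (s + n) = Complex.Gamma s * (ascPochhammer ℂ n).eval s := by
  induction n with
  | zero => simp
  | succ n ih =>
    have hne : s + n ≠ 0 := by
      intro h
      have := congrArg Complex.re h
      simp only [Complex.add_re, Complex.natCast_re, Complex.zero_re] at this
      have hn : (0:ℝ) ≤ (n:ℝ) := Nat.cast_nonneg n
      linarith
    have h1 : (s + ((n+1 : ℕ) : ℂ)) = (s + n) + 1 := by push_cast; ring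
    rw [h1, Complex.Gamma_add_one _ hne, ih, ascPochhammer_succ_eval]
    ring

lemma ascPoch_ne_zero (s : ℂ) (hs : 0 < s.re) (n : ℕ) : (ascPochhammer ℂ n).eval s ≠ 0 := by
  induction n with
  | zero => simp
  | succ n ih =>
    rw [ascPochhammer_succ_eval]
    refine mul_ne_zero ih ?_
    intro h
    have := congrArg Complex.re h
    simp only [Complex.add_re, Complex.natCast_re, Complex.zero_re] at this
    have hn : (0:ℝ) ≤ (n:ℝ) := Nat.cast_nonneg n
    linarith

lemma rgamma_le (r : ℝ) (hr : 1 ≤ r) (n : ℕ) :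
    Real.Gamma (r + n) ≤ Real.Gamma r * r ^ n * n.factorial := by
  induction n with
  | zero => simp
  | succ n ih =>
    have hrn : (0:ℝ) < r + n := by positivity
    have h1 : r + ((n+1 : ℕ) : ℝ) = (r + n) + 1 := by push_cast; ring
    rw [h1, Real.Gamma_add_one hrn.ne']
    have hg : 0 ≤ Real.Gamma (r + n) := (Real.Gamma_pos_of_pos hrn).le
    have hb : r + (n:ℝ) ≤ r * (n + 1) := by nlinarith [Nat.cast_nonneg (α := ℝ) n]
    calc (r + n) * Real.Gamma (r + n) ≤ (r * (n+1)) * (Real.Gamma r * r ^ n * n.factorial) := by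
          apply mul_le_mul hb ih hg
          positivity
      _ = Real.Gamma r * r ^ (n+1) * (n+1).factorial := by
          rw [Nat.factorial_succ]; push_cast; ring

lemma cgamma_abs_ge (μ : ℂ) (hμ : 0 < μ.re) (n : ℕ) :
    (n.factorial : ℝ) * ‖Complex.Gamma (μ + 1)‖ ≤
      ‖Complex.Gamma (μ + n + 1)‖ := by
  induction n with
  | zero => simp
  | succ n ih =>
    have hre : (μ + n + 1).re = μ.re + n + 1 := by
      simp [Complex.add_re, Complex.natCast_re]
    have hne : μ + n + 1 ≠ 0 := by
      intro h
      have := congrArg Complex.re h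
      rw [hre, Complex.zero_re] at this
      have hn : (0:ℝ) ≤ (n:ℝ) := Nat.cast_nonneg n
      linarith
    have h1 : μ + ((n+1 : ℕ) : ℂ) + 1 = (μ + n + 1) + 1 := by push_cast; ring
    rw [h1, Complex.Gamma_add_one _ hne, norm_mul]
    have habs : (n:ℝ) + 1 ≤ ‖μ + n + 1‖ := by
      have := Complex.re_le_norm (μ + n + 1)
      rw [hre] at this; linarith
    have h0 : (0:ℝ) ≤ (n.factorial : ℝ) * ‖Complex.Gamma (μ + 1)‖ := by positivity
    calc ((n+1).factorial : ℝ) * ‖Complex.Gamma (μ + 1)‖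
        = ((n:ℝ)+1) * ((n.factorial:ℝ) * ‖Complex.Gamma (μ + 1)‖) := by
          rw [Nat.factorial_succ]; push_cast; ring
      _ ≤ ‖μ + n + 1‖ * ‖Complex.Gamma (μ + n + 1)‖ := by
          apply mul_le_mul habs ih h0
          positivity


lemma rgauss {b : ℝ} (hb : 0 < b) {q : ℝ} (hq : -1 < q) :
    ∫ x in Ioi (0:ℝ), x ^ q * Real.exp (-(b * x ^ 2)) =
      b ^ (-(q+1)/2) * (1/2) * Real.Gamma ((q+1)/2) := by
  rw [← integral_rpow_mul_exp_neg_mul_rpow (by norm_num : (0:ℝ) < 2) hq hb]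
  refine setIntegral_congr_fun measurableSet_Ioi fun x hx => ?_
  rw [show x ^ (2:ℝ) = x ^ 2 by
    rw [show (2:ℝ) = ((2:ℕ):ℝ) by norm_num, Real.rpow_natCast], neg_mul]

lemma cgauss_integrable {b : ℝ} (hb : 0 < b) {s : ℂ} (hs : 0 < s.re) :
    IntegrableOn (fun x : ℝ => (x:ℂ) ^ (s - 1) * Complex.exp (-(b * x ^ 2) : ℝ)) (Ioi 0) := by
  constructor
  · refine ContinuousOn.aestronglyMeasurable (ContinuousOn.mul ?_ ?_) measurableSet_Ioi
    · intro x hx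
      exact (Complex.continuousAt_ofReal_cpow_const x _ (Or.inr (ne_of_gt hx))).continuousWithinAt
    · exact (Complex.continuous_exp.comp (Complex.continuous_ofReal.comp
        (by fun_prop))).continuousOn
  · rw [← hasFiniteIntegral_norm_iff]
    refine HasFiniteIntegral.congr
      (integrableOn_rpow_mul_exp_neg_mul_sq hb (show (-1:ℝ) < s.re - 1 by linarith)).2 ?_
    refine (ae_restrict_iff' measurableSet_Ioi).mpr ?_
    filter_upwards with x hx
    rw [norm_mul,
      Complex.norm_cpow_eq_rpow_re_of_pos hx, Complex.norm_exp]
    simp only [Complex.ofReal_re, Complex.sub_re, Complex.one_re, neg_mul]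

lemma cgauss_norm {b : ℝ} (hb : 0 < b) (s : ℂ) {x : ℝ} (hx : 0 < x) :
    ‖(x:ℂ) ^ (s - 1) * Complex.exp (-(b * x ^ 2) : ℝ)‖ =
      x ^ (s.re - 1) * Real.exp (-(b * x ^ 2)) := by
  rw [norm_mul,
    Complex.norm_cpow_eq_rpow_re_of_pos hx, Complex.norm_exp]
  simp only [Complex.ofReal_re, Complex.sub_re, Complex.one_re]

lemma cgauss {b : ℝ} (hb : 0 < b) {s : ℂ} (hs : 0 < s.re) :
    ∫ x in Ioi (0:ℝ), (x:ℂ) ^ (s - 1) * Complex.exp (-(b * x ^ 2) : ℝ) =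
      (1/2 : ℂ) * (1/(b:ℂ)) ^ (s/2) * Complex.Gamma (s/2) := by
  have h1 : 0 < (s/2).re := by
    rw [show s / 2 = s * (1/2 : ℝ) by push_cast; ring, Complex.mul_re]
    simp only [Complex.ofReal_re, Complex.ofReal_im, mul_zero, sub_zero]
    linarith
  have h2 := Complex.integral_cpow_mul_exp_neg_mul_Ioi h1 hb
  have h3 := integral_comp_rpow_Ioi_of_pos
      (g := fun t : ℝ => (t:ℂ) ^ (s/2 - 1) * Complex.exp (-(b * t) : ℝ))
      (p := 2) (by norm_num)
  have h4 : ∫ x in Ioi (0:ℝ), ((2:ℝ) * x ^ ((2:ℝ) - 1)) •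
      ((((x ^ (2:ℝ) : ℝ)):ℂ) ^ (s/2 - 1) * Complex.exp (-(b * x ^ (2:ℝ)) : ℝ)) =
      ∫ x in Ioi (0:ℝ), (2:ℂ) * ((x:ℂ) ^ (s - 1) * Complex.exp (-(b * x ^ 2) : ℝ)) := by
    refine setIntegral_congr_fun measurableSet_Ioi fun x hx => ?_
    have hx0 : (x:ℂ) ≠ 0 := by exact_mod_cast hx.ne'
    have hx1 : x ^ ((2:ℝ) - 1) = x := by norm_num
    have hx2 : x ^ (2:ℝ) = x ^ 2 := by
      rw [show (2:ℝ) = ((2:ℕ):ℝ) by norm_num, Real.rpow_natCast]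
    rw [hx1, hx2]
    have hlog : (Complex.log x * 2).im = 0 := by
      rw [← Complex.ofReal_log hx.le]
      simp
    have hc1 : ((x:ℂ)) ^ ((2:ℂ) * (s/2 - 1)) = ((x:ℂ) ^ (2:ℂ)) ^ (s/2 - 1) :=
      Complex.cpow_mul _ (by rw [hlog]; linarith [Real.pi_pos]) (by rw [hlog]; linarith [Real.pi_pos])
    have hcast : ((x ^ 2 : ℝ) : ℂ) = (x:ℂ) ^ (2:ℂ) := by
      push_cast
      rw [Complex.cpow_two]
    have hc2 : ((x ^ 2 : ℝ) : ℂ) ^ (s/2 - 1) = (x:ℂ) ^ (s - 2) := by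
      rw [hcast, ← hc1, show (2:ℂ) * (s/2 - 1) = s - 2 by ring]
    have hxs : (x:ℂ) ^ (s - 1) = (x:ℂ) ^ (s - 2) * x := by
      rw [show s - 1 = (s - 2) + 1 by ring, Complex.cpow_add _ _ hx0, Complex.cpow_one]
    rw [hc2, Complex.real_smul, hxs]
    push_cast
    ring
  rw [h4, integral_const_mul] at h3
  have h5 : ∫ y in Ioi (0:ℝ),
      (fun t : ℝ => (t:ℂ) ^ (s/2 - 1) * Complex.exp (-(b * t) : ℝ)) y =
      (1 / (b:ℂ)) ^ (s/2) * Complex.Gamma (s/2) := by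
    rw [← h2]
    refine setIntegral_congr_fun measurableSet_Ioi fun t ht => ?_
    norm_cast
  rw [h5] at h3
  linear_combination h3 / 2


set_option maxHeartbeats 2000000 in
theorem stmt4 (a : ℝ) (ha : 0 < a) (z : ℂ) (hz : 2 ≤ z.re) (ν : ℂ) (hν : |ν.im| ≤ 1)
    (μc : ℂ) (hμc : μc = (2 * z + ν ^ 2) ^ (1 / 2 : ℂ)) :
    IntegrableOn (fun x : ℝ =>
        Complex.exp (-(x ^ 2 : ℝ) / (2 * a)) * (x : ℂ) ^ (ν + 3) * besselI μc (x / a))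
      (Ioi 0) ∧
    Dnu ν a z =
      Complex.Gamma ((ν + 4 + μc) / 2) * (1 / Complex.Gamma (μc + 1)) *
        kummerPhi ((ν + 4 + μc) / 2) (μc + 1) (1 / (2 * a)) *
        Complex.exp (-(1 / (2 * a))) * ((2 * a : ℝ) : ℂ) ^ ((ν + 2 - μc) / 2) := by
  -- basic constants
  set c : ℝ := 2 * a with hc_def
  have hc : 0 < c := by rw [hc_def]; positivity
  set b : ℝ := 1 / c with hb_def
  have hb : 0 < b := by rw [hb_def]; positivity
  clear_value c b
  have hre2 : ∀ u : ℂ, (u / 2).re = u.re / 2 := by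
    intro u
    rw [show u / 2 = u * ((1/2 : ℝ) : ℂ) by push_cast; ring, Complex.mul_re]
    simp only [Complex.ofReal_re, Complex.ofReal_im, mul_zero, sub_zero]
    ring
  -- properties of μc
  have hνim : ν.im ^ 2 ≤ 1 := by
    rcases abs_le.mp hν with ⟨h1, h2⟩; nlinarith
  have hwre : ν.re ^ 2 + 3 ≤ (2 * z + ν ^ 2).re := by
    simp only [Complex.add_re, Complex.mul_re, sq, Complex.re_ofNat, Complex.im_ofNat,
      Complex.mul_im]
    nlinarith
  have hw0 : 2 * z + ν ^ 2 ≠ 0 := by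
    intro h
    rw [h] at hwre
    simp only [Complex.zero_re] at hwre
    nlinarith [sq_nonneg ν.re]
  have hwre0 : 0 < (2 * z + ν ^ 2).re := by nlinarith [sq_nonneg ν.re]
  have hμre : 0 < μc.re := by
    rw [hμc, Complex.cpow_def_of_ne_zero hw0, Complex.exp_re]
    have him : (Complex.log (2 * z + ν ^ 2) * (1/2 : ℂ)).im
        = (2 * z + ν ^ 2).arg / 2 := by
      rw [Complex.mul_im]
      simp [Complex.log_im]
      ring
    have harg : |(2 * z + ν ^ 2).arg| < Real.pi / 2 :=
      Complex.abs_arg_lt_pi_div_two_iff.mpr (Or.inl hwre0)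
    have hcos : 0 < Real.cos ((Complex.log (2 * z + ν ^ 2) * (1/2 : ℂ)).im) := by
      rw [him]
      apply Real.cos_pos_of_mem_Ioo
      constructor
      · rcases abs_lt.mp harg with ⟨h1, _⟩; linarith
      · rcases abs_lt.mp harg with ⟨_, h2⟩; linarith
    positivity
  have hμ2 : μc ^ 2 = 2 * z + ν ^ 2 := by
    have h1 : -Real.pi < (Complex.log (2 * z + ν ^ 2) * (1/2 : ℂ)).im := by
      rw [Complex.mul_im]
      simp only [Complex.log_im, Complex.one_re, Complex.one_im]
      have := Complex.neg_pi_lt_arg (2 * z + ν ^ 2)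
      have hpi := Real.pi_pos
      simp [Complex.div_re, Complex.div_im]
      nlinarith [Complex.arg_le_pi (2 * z + ν ^ 2)]
    have h2 : (Complex.log (2 * z + ν ^ 2) * (1/2 : ℂ)).im ≤ Real.pi := by
      rw [Complex.mul_im]
      simp only [Complex.log_im]
      have := Complex.arg_le_pi (2 * z + ν ^ 2)
      have hpi := Real.pi_pos
      simp [Complex.div_re, Complex.div_im]
      nlinarith [Complex.neg_pi_lt_arg (2 * z + ν ^ 2)]
    have := Complex.cpow_mul (x := 2 * z + ν ^ 2) (y := (1/2 : ℂ)) (2 : ℂ) h1 h2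
    rw [show (1/2 : ℂ) * 2 = 1 by norm_num, Complex.cpow_one] at this
    rw [hμc, ← Complex.cpow_two, ← this]
  have hμsq : ν.re ^ 2 + 3 ≤ μc.re ^ 2 := by
    have := congrArg Complex.re hμ2
    rw [sq, Complex.mul_re] at this
    nlinarith [sq_nonneg μc.im]
  have hνμ : 0 < ν.re + μc.re := by nlinarith
  -- the series data
  set α : ℂ := (ν + 4 + μc) / 2 with hα_def
  set r : ℝ := (ν.re + 4 + μc.re) / 2 with hr_def
  clear_value α r
  have hαre : α.re = r := by
    rw [hα_def, hre2, hr_def]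
    simp [Complex.add_re]
  have hr1 : 2 < r := by rw [hr_def]; nlinarith
  have hαpos : 0 < α.re := by rw [hαre]; linarith
  have hμ1pos : 0 < (μc + 1).re := by simp [Complex.add_re]; linarith
  set sn : ℕ → ℂ := fun n => ν + 4 + μc + 2 * n with hsn_def
  clear_value sn
  have hsnre : ∀ n : ℕ, (sn n).re = 2 * (r + n) := by
    intro n
    rw [hsn_def]
    simp [Complex.add_re, Complex.mul_re, hr_def]
    ring
  have hsnpos : ∀ n : ℕ, 0 < (sn n).re := by
    intro n
    rw [hsnre]
    have : (0:ℝ) ≤ n := Nat.cast_nonneg n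
    nlinarith
  have hc0 : (c : ℂ) ≠ 0 := by exact_mod_cast hc.ne'
  set K : ℕ → ℂ := fun n =>
    (((c : ℝ) : ℂ) ^ (μc + 2 * n))⁻¹ / ((n.factorial : ℂ) * Complex.Gamma (μc + n + 1))
    with hK_def
  clear_value K
  set F : ℕ → ℝ → ℂ := fun n x =>
    K n * ((x : ℂ) ^ (sn n - 1) * Complex.exp (-(b * x ^ 2) : ℝ)) with hF_def
  clear_value F
  have hGne : ∀ n : ℕ, Complex.Gamma (μc + n + 1) ≠ 0 := by
    intro n
    apply Complex.Gamma_ne_zero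
    intro m h
    have := congrArg Complex.re h
    simp only [Complex.add_re, Complex.natCast_re, Complex.one_re, Complex.neg_re] at this
    have h1 : (0:ℝ) ≤ (n:ℝ) := Nat.cast_nonneg n
    have h2 : (0:ℝ) ≤ (m:ℝ) := Nat.cast_nonneg m
    linarith
  -- pointwise identification of the integrand with the series ∑ F n
  have hterm : ∀ x : ℝ, 0 < x →
      Complex.exp (-(x ^ 2 : ℝ) / (2 * a)) * (x : ℂ) ^ (ν + 3) * besselI μc (x / a)
        = ∑' n : ℕ, F n x := by
    intro x hx
    have hx0 : (x : ℂ) ≠ 0 := by exact_mod_cast hx.ne'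
    rw [besselI, ← tsum_mul_left]
    refine tsum_congr fun n => ?_
    have hexp : Complex.exp (-(x ^ 2 : ℝ) / (2 * a)) = Complex.exp (-(b * x ^ 2) : ℝ) := by
      congr 1
      rw [hb_def, hc_def]
      push_cast
      field_simp
    have hdiv : ((x / a : ℝ) : ℂ) / 2 = ((x * b : ℝ) : ℂ) := by
      rw [hb_def, hc_def]
      push_cast
      field_simp
    have hsplit : ((x * b : ℝ) : ℂ) ^ (μc + 2 * n)
        = (x : ℂ) ^ (μc + 2 * n) * ((b : ℝ) : ℂ) ^ (μc + 2 * n) := by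
      rw [Complex.ofReal_mul]
      exact Complex.mul_cpow_ofReal_nonneg hx.le hb.le _
    have hbinv : ((b : ℝ) : ℂ) ^ (μc + 2 * n) = (((c : ℝ) : ℂ) ^ (μc + 2 * n))⁻¹ := by
      rw [hb_def, show ((1 / c : ℝ) : ℂ) = ((c : ℝ) : ℂ)⁻¹ by push_cast; ring]
      exact Complex.inv_cpow _ _ (by
        rw [Complex.arg_ofReal_of_nonneg hc.le]
        exact Real.pi_ne_zero.symm)
    have hxmerge : (x : ℂ) ^ (ν + 3) * (x : ℂ) ^ (μc + 2 * n) = (x : ℂ) ^ (sn n - 1) := by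
      rw [← Complex.cpow_add _ _ hx0, hsn_def]
      congr 1
      push_cast
      ring
    rw [hexp, hdiv, hsplit, hbinv, hF_def, hK_def]
    simp only []
    rw [← hxmerge]
    ring
  -- integrability and values of the terms
  have hFint : ∀ n : ℕ, IntegrableOn (F n) (Ioi 0) := by
    intro n
    rw [hF_def]
    exact (cgauss_integrable hb (hsnpos n)).const_mul (K n)
  have hFval : ∀ n : ℕ, ∫ x in Ioi (0:ℝ), F n x
      = K n * ((1/2 : ℂ) * (1/(b:ℂ)) ^ (sn n / 2) * Complex.Gamma (sn n / 2)) := by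
    intro n
    rw [hF_def]
    simp only []
    rw [MeasureTheory.integral_const_mul, cgauss hb (hsnpos n)]
  -- norm of K n
  have hApos : ∀ n : ℕ, 0 < ‖Complex.Gamma (μc + n + 1)‖ := fun n =>
    norm_pos_iff.mpr (hGne n)
  set G : ℝ := ‖Complex.Gamma (μc + 1)‖ with hG_def
  clear_value G
  have hGpos : 0 < G := by
    rw [hG_def]
    exact norm_pos_iff.mpr (by simpa using hGne 0)
  have hKnorm : ∀ n : ℕ, ‖K n‖ = (c ^ (μc.re + 2 * (n:ℝ)))⁻¹ /
      ((n.factorial : ℝ) * ‖Complex.Gamma (μc + n + 1)‖) := by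
    intro n
    rw [hK_def]
    simp only []
    rw [norm_div, norm_inv,
      Complex.norm_cpow_eq_rpow_re_of_pos hc, norm_mul, Complex.norm_natCast]
    congr 2
    simp [Complex.add_re, Complex.mul_re]
  -- rewriting rpow of b in terms of c
  have hbc : ∀ t : ℝ, b ^ t = c ^ (-t) := by
    intro t
    rw [hb_def, one_div, Real.inv_rpow hc.le, ← Real.rpow_neg hc.le]
  -- value of the norm integrals
  set En : ℕ → ℝ := fun n => ∫ x in Ioi (0:ℝ), ‖F n x‖ with hEn_def
  clear_value En
  have hEnorm : ∀ n : ℕ, En n = ‖K n‖ * (c ^ (r + (n:ℝ)) * (1/2) * Real.Gamma (r + n)) := by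
    intro n
    rw [hEn_def]
    simp only []
    have h1 : ∀ x ∈ Ioi (0:ℝ), ‖F n x‖
        = ‖K n‖ * (x ^ ((sn n).re - 1) * Real.exp (-(b * x ^ 2))) := by
      intro x hx
      rw [hF_def]
      simp only []
      rw [norm_mul, cgauss_norm hb _ hx]
    rw [setIntegral_congr_fun measurableSet_Ioi h1, MeasureTheory.integral_const_mul,
      rgauss hb (show (-1:ℝ) < (sn n).re - 1 by have := hsnpos n; linarith),
      show (sn n).re - 1 + 1 = 2 * (r + (n:ℝ)) by rw [hsnre]; ring,
      show -(2 * (r + (n:ℝ))) / 2 = -(r + (n:ℝ)) by ring,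
      show 2 * (r + (n:ℝ)) / 2 = r + (n:ℝ) by ring, hbc, neg_neg]
  -- splitting of the rpow exponents
  have e1 : ∀ n : ℕ, c ^ (μc.re + 2 * (n:ℝ)) = c ^ μc.re * (c ^ 2) ^ n := by
    intro n
    rw [Real.rpow_add hc, show (2 * (n:ℝ)) = ((2 * n : ℕ) : ℝ) by push_cast; ring,
      Real.rpow_natCast, pow_mul]
  have e2 : ∀ n : ℕ, c ^ (r + (n:ℝ)) = c ^ r * c ^ n := by
    intro n
    rw [Real.rpow_add hc, Real.rpow_natCast]
  -- summable bound for the norm integrals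
  set M : ℝ := (c ^ μc.re)⁻¹ * (c ^ r * (1/2) * Real.Gamma r) / G with hM_def
  clear_value M
  have hEn_le : ∀ n : ℕ, En n ≤ M * ((b * r) ^ n / (n.factorial : ℝ)) := by
    intro n
    rw [hEnorm n, hKnorm n, e1 n, e2 n]
    have hΓpos : 0 < Real.Gamma (r + n) := Real.Gamma_pos_of_pos (by positivity)
    have hfacpos : (0:ℝ) < (n.factorial : ℝ) := by exact_mod_cast n.factorial_pos
    have hnum : (c ^ μc.re * (c ^ 2) ^ n)⁻¹ * (c ^ r * c ^ n * (1/2) * Real.Gamma (r + n))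
        ≤ (c ^ μc.re * (c ^ 2) ^ n)⁻¹ *
          (c ^ r * c ^ n * (1/2) * (Real.Gamma r * r ^ n * n.factorial)) := by
      have := rgamma_le r (by linarith) n
      have hpos : (0:ℝ) ≤ (c ^ μc.re * (c ^ 2) ^ n)⁻¹ * (c ^ r * c ^ n * (1/2)) := by
        positivity
      calc (c ^ μc.re * (c ^ 2) ^ n)⁻¹ * (c ^ r * c ^ n * (1/2) * Real.Gamma (r + n))
          = ((c ^ μc.re * (c ^ 2) ^ n)⁻¹ * (c ^ r * c ^ n * (1/2))) * Real.Gamma (r + n) := by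
            ring
        _ ≤ ((c ^ μc.re * (c ^ 2) ^ n)⁻¹ * (c ^ r * c ^ n * (1/2))) *
            (Real.Gamma r * r ^ n * n.factorial) := by
            exact mul_le_mul_of_nonneg_left this hpos
        _ = (c ^ μc.re * (c ^ 2) ^ n)⁻¹ *
            (c ^ r * c ^ n * (1/2) * (Real.Gamma r * r ^ n * n.factorial)) := by ring
    have hden : (n.factorial : ℝ) * ((n.factorial : ℝ) * G)
        ≤ (n.factorial : ℝ) * ‖Complex.Gamma (μc + n + 1)‖ :=
      mul_le_mul_of_nonneg_left (by rw [hG_def]; exact cgamma_abs_ge μc hμre n) hfacpos.le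
    calc (c ^ μc.re * (c ^ 2) ^ n)⁻¹ /
          ((n.factorial : ℝ) * ‖Complex.Gamma (μc + n + 1)‖) *
          (c ^ r * c ^ n * (1/2) * Real.Gamma (r + n))
        = (c ^ μc.re * (c ^ 2) ^ n)⁻¹ * (c ^ r * c ^ n * (1/2) * Real.Gamma (r + n)) /
          ((n.factorial : ℝ) * ‖Complex.Gamma (μc + n + 1)‖) := by ring
      _ ≤ (c ^ μc.re * (c ^ 2) ^ n)⁻¹ *
          (c ^ r * c ^ n * (1/2) * (Real.Gamma r * r ^ n * n.factorial)) /
          ((n.factorial : ℝ) * ((n.factorial : ℝ) * G)) := by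
          apply div_le_div₀ (by positivity) hnum (by positivity) hden
      _ = M * ((b * r) ^ n / (n.factorial : ℝ)) := by
          rw [hM_def, hb_def]
          have hcr : c ^ r ≠ 0 := by positivity
          have hcm : c ^ μc.re ≠ 0 := by positivity
          field_simp
          rw [div_pow, mul_div_assoc', eq_div_iff (by positivity)]; ring
  have hEn_nonneg : ∀ n : ℕ, 0 ≤ En n := by
    intro n
    rw [hEn_def]
    exact integral_nonneg fun x => norm_nonneg _
  have hEn_sum : Summable En := by
    refine Summable.of_nonneg_of_le hEn_nonneg hEn_le ?_
    exact (Real.summable_pow_div_factorial (b * r)).mul_left M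
  -- pointwise summability of the series
  have hFsum_norm : ∀ x : ℝ, 0 < x → Summable fun n : ℕ => ‖F n x‖ := by
    intro x hx
    set Mx : ℝ := (c ^ μc.re)⁻¹ * (x ^ (2*r - 1) * Real.exp (-(b * x^2))) / G with hMx_def
    clear_value Mx
    refine Summable.of_nonneg_of_le (fun n => norm_nonneg _) (fun n => ?_)
      (by simpa [mul_div_assoc] using (Real.summable_pow_div_factorial (x^2/c^2)).mul_left Mx)
    rw [hF_def]
    simp only []
    rw [norm_mul, cgauss_norm hb _ hx, hKnorm n, e1 n]
    have hxsplit : x ^ ((sn n).re - 1) = x ^ (2*r - 1) * (x^2)^n := by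
      rw [show (sn n).re - 1 = (2*r - 1) + ((2*n : ℕ) : ℝ) by rw [hsnre]; push_cast; ring,
        Real.rpow_add hx, Real.rpow_natCast, pow_mul]
    rw [hxsplit]
    have hfac1 : (1:ℝ) ≤ (n.factorial : ℝ) := by exact_mod_cast n.factorial_pos
    have hAG : (n.factorial : ℝ) * G ≤ (n.factorial : ℝ) *
        ‖Complex.Gamma (μc + n + 1)‖ := by
      have h2 := cgamma_abs_ge μc hμre n
      rw [← hG_def] at h2
      nlinarith [hGpos, hfac1, norm_nonneg (Complex.Gamma (μc + n + 1))]
    calc (c ^ μc.re * (c ^ 2) ^ n)⁻¹ /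
          ((n.factorial : ℝ) * ‖Complex.Gamma (μc + n + 1)‖) *
          (x ^ (2*r - 1) * (x^2)^n * Real.exp (-(b * x ^ 2)))
        = (c ^ μc.re * (c ^ 2) ^ n)⁻¹ * (x ^ (2*r - 1) * (x^2)^n * Real.exp (-(b * x ^ 2))) /
          ((n.factorial : ℝ) * ‖Complex.Gamma (μc + n + 1)‖) := by ring
      _ ≤ (c ^ μc.re * (c ^ 2) ^ n)⁻¹ * (x ^ (2*r - 1) * (x^2)^n * Real.exp (-(b * x ^ 2))) /
          ((n.factorial : ℝ) * G) := by
          apply div_le_div₀ (by positivity) le_rfl (by positivity) hAG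
      _ = Mx * ((x^2/c^2) ^ n / (n.factorial : ℝ)) := by
          rw [hMx_def]
          have h1 : c ^ μc.re ≠ 0 := by positivity
          field_simp
          rw [div_pow, mul_div_assoc', eq_div_iff (by positivity)]; ring
  have hFsummable : ∀ x : ℝ, 0 < x → Summable fun n : ℕ => F n x := fun x hx =>
    (hFsum_norm x hx).of_norm
  -- a.e. identification
  have hae : (fun x : ℝ => Complex.exp (-(x ^ 2 : ℝ) / (2 * a)) * (x:ℂ) ^ (ν + 3) *
      besselI μc (x / a)) =ᵐ[volume.restrict (Ioi 0)] fun x => ∑' n : ℕ, F n x := by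
    filter_upwards [ae_restrict_mem measurableSet_Ioi] with x hx
    exact hterm x hx
  have hAESM : AEStronglyMeasurable (fun x : ℝ => ∑' n : ℕ, F n x)
      (volume.restrict (Ioi 0)) := by
    refine aestronglyMeasurable_of_tendsto_ae Filter.atTop
      (f := fun k (x : ℝ) => ∑ n ∈ Finset.range k, F n x)
      (fun k => Finset.aestronglyMeasurable_fun_sum _ fun n _ => (hFint n).1) ?_
    filter_upwards [ae_restrict_mem measurableSet_Ioi] with x hx
    exact (hFsummable x hx).hasSum.tendsto_sum_nat
  have hlint : ∀ n : ℕ, ∫⁻ x in Ioi (0:ℝ), ‖F n x‖₊ = ENNReal.ofReal (En n) := by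
    intro n
    rw [hEn_def]
    exact (ofReal_integral_norm_eq_lintegral_enorm (hFint n)).symm
  have hlintsum : ∑' n : ℕ, ∫⁻ x in Ioi (0:ℝ), ‖F n x‖₊ < ⊤ := by
    calc ∑' n : ℕ, ∫⁻ x in Ioi (0:ℝ), ‖F n x‖₊
        = ∑' n : ℕ, ENNReal.ofReal (En n) := tsum_congr hlint
      _ = ENNReal.ofReal (∑' n, En n) :=
          (ENNReal.ofReal_tsum_of_nonneg hEn_nonneg hEn_sum).symm
      _ < ⊤ := ENNReal.ofReal_lt_top
  have hHFI : HasFiniteIntegral (fun x : ℝ => ∑' n : ℕ, F n x) (volume.restrict (Ioi 0)) := by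
    rw [HasFiniteIntegral]
    calc ∫⁻ x in Ioi (0:ℝ), ↑‖∑' n : ℕ, F n x‖₊
        ≤ ∫⁻ x in Ioi (0:ℝ), ∑' n : ℕ, (‖F n x‖₊ : ℝ≥0∞) := by
          apply lintegral_mono_ae
          filter_upwards [ae_restrict_mem measurableSet_Ioi] with x hx
          have hsx : Summable fun n : ℕ => ‖F n x‖₊ := by
            rw [← NNReal.summable_coe]
            simpa [coe_nnnorm] using hFsum_norm x hx
          calc (↑‖∑' n : ℕ, F n x‖₊ : ℝ≥0∞)
              ≤ ↑(∑' n : ℕ, ‖F n x‖₊) := ENNReal.coe_le_coe.2 (nnnorm_tsum_le hsx)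
            _ = ∑' n : ℕ, (‖F n x‖₊ : ℝ≥0∞) := ENNReal.coe_tsum hsx
      _ = ∑' n : ℕ, ∫⁻ x in Ioi (0:ℝ), ‖F n x‖₊ :=
          lintegral_tsum fun n => (hFint n).1.enorm
      _ < ⊤ := hlintsum
  have hIntTsum : Integrable (fun x : ℝ => ∑' n : ℕ, F n x) (volume.restrict (Ioi 0)) :=
    ⟨hAESM, hHFI⟩
  refine ⟨hIntTsum.congr hae.symm, ?_⟩
  -- the value of the integral
  have hIval : ∫ x in Ioi (0:ℝ), Complex.exp (-(x ^ 2 : ℝ) / (2 * a)) * (x:ℂ) ^ (ν + 3) *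
      besselI μc (x / a) = ∑' n : ℕ, ∫ x in Ioi (0:ℝ), F n x := by
    rw [integral_congr_ae hae]
    refine (integral_tsum_of_summable_integral_norm hFint ?_).symm
    have : (fun n : ℕ => ∫ x in Ioi (0:ℝ), ‖F n x‖) = En := hEn_def.symm
    rw [this]
    exact hEn_sum
  -- final algebra
  have hca : ((c : ℝ) : ℂ) = 2 * (a : ℂ) := by rw [hc_def]; push_cast; ring
  have hbinvc : (1 / ((b : ℝ) : ℂ) : ℂ) = ((c : ℝ) : ℂ) := by
    rw [hb_def]
    push_cast
    rw [one_div_one_div]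
  have hsn2 : ∀ n : ℕ, sn n / 2 = α + n := by
    intro n
    simp only [hsn_def, hα_def]
    push_cast
    ring
  have hΓμ1ne : Complex.Gamma (μc + 1) ≠ 0 := by simpa using hGne 0
  have hfacC : ∀ n : ℕ, ((n.factorial : ℕ) : ℂ) ≠ 0 := fun n => by
    exact_mod_cast n.factorial_ne_zero
  have hcμne : ((c : ℝ) : ℂ) ^ μc ≠ 0 := by
    simp [Complex.cpow_eq_zero_iff, hc0]
  have hcpne : ((c : ℝ) : ℂ) ^ ((ν + 2 - μc)/2) ≠ 0 := by
    simp [Complex.cpow_eq_zero_iff, hc0]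
  have hpow' : ∀ n : ℕ, (((c:ℝ):ℂ) ^ (μc + 2*(n:ℂ)))⁻¹
      = (((c:ℝ):ℂ) ^ ((ν+2-μc)/2) * ((c:ℝ):ℂ) ^ (1:ℂ)) * ((((c:ℝ):ℂ) ^ n)⁻¹ *
        ((((c:ℝ):ℂ) ^ (α + (n:ℂ)))⁻¹)) := by
    intro n
    rw [← Complex.cpow_natCast ((c:ℝ):ℂ) n, ← Complex.cpow_neg, ← Complex.cpow_neg,
      ← Complex.cpow_neg, ← Complex.cpow_add _ _ hc0,
      ← Complex.cpow_add _ _ hc0, ← Complex.cpow_add _ _ hc0]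
    congr 1
    rw [hα_def]
    ring
  have h2a : (1 : ℂ)/(2 * (a : ℂ)) = (((c : ℝ) : ℂ))⁻¹ := by rw [← hca, one_div]
  have hTerm2 : ∀ n : ℕ, ∫ x in Ioi (0:ℝ), F n x =
      ((a : ℂ) * Complex.Gamma α * (1 / Complex.Gamma (μc + 1)) *
        ((c : ℝ) : ℂ) ^ ((ν + 2 - μc)/2)) *
      ((ascPochhammer ℂ n).eval α / (ascPochhammer ℂ n).eval (μc + 1) *
        (1/(2 * (a : ℂ))) ^ n / (n.factorial : ℂ)) := by
    intro n
    rw [hFval n, hK_def]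
    simp only []
    rw [hbinvc, hsn2 n, gamma_ascPoch α hαpos n,
      show μc + (n:ℂ) + 1 = (μc + 1) + n by ring,
      gamma_ascPoch (μc + 1) hμ1pos n,
      hpow' n, Complex.cpow_one, h2a, inv_pow,
      show (a:ℂ) = ((c : ℝ) : ℂ)/2 by rw [hca]; ring]
    have hp := ascPoch_ne_zero (μc + 1) hμ1pos n
    have hcn : ((c:ℝ):ℂ) ^ n ≠ 0 := pow_ne_zero n hc0
    have hcan : ((c:ℝ):ℂ) ^ (α + (n:ℂ)) ≠ 0 := by
      simp [Complex.cpow_eq_zero_iff, hc0]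
    field_simp [hΓμ1ne, hc0, hcn, hcan]
  rw [Dnu, ← hμc, hIval, tsum_congr hTerm2, tsum_mul_left, kummerPhi,
    show (a:ℂ) = ((c : ℝ) : ℂ)/2 by rw [hca]; ring]
  field_simp


end
end

section
/- Let a > 0 be real and z a complex number with Re(z) ≥ 2. Then the map sending ν to D_ν(a, z) = (e^{−1/(2a)}/a) ∫_0^∞ e^{−x²/(2a)} x^{ν+3} I_{√(2z+ν²)}(x/a) dx is analytic (complex differentiable) on the open band {ν ∈ ℂ : |Im(ν)| < 1}. -/
open MeasureTheory ProbabilityTheory Set Filter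
open scoped ENNReal NNReal Topology

noncomputable section

lemma aux_sqrt_mul_self {w : ℂ} (hw : w ≠ 0) : w ^ (1/2 : ℂ) * w ^ (1/2 : ℂ) = w := by
  rw [← Complex.cpow_add _ _ hw]
  norm_num

lemma aux_re_sqrt_nonneg (w : ℂ) : 0 ≤ (w ^ (1/2 : ℂ)).re := by
  rcases eq_or_ne w 0 with rfl | hw
  · rw [Complex.zero_cpow (by norm_num)]; simp
  · rw [Complex.cpow_def_of_ne_zero hw, Complex.exp_re]
    apply mul_nonneg (Real.exp_nonneg _)
    apply Real.cos_nonneg_of_mem_Icc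
    have h1 := Complex.neg_pi_lt_arg w
    have h2 := Complex.arg_le_pi w
    have him : (Complex.log w * (1/2 : ℂ)).im = w.arg / 2 := by
      simp [Complex.mul_im, Complex.log_im]
      ring
    rw [him]
    constructor <;> [linarith [Real.pi_pos]; linarith]

lemma aux_gamma_lb (μ : ℂ) (hμ : 0 ≤ μ.re) (n : ℕ) :
    (n.factorial : ℝ) * ‖Complex.Gamma (μ + 1)‖ ≤ ‖Complex.Gamma (μ + n + 1)‖ := by
  induction n with
  | zero => simp
  | succ n ih =>
    have hne : μ + n + 1 ≠ 0 := by
      intro h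
      have := congrArg Complex.re h
      simp at this
      linarith [Nat.cast_nonneg (α := ℝ) n]
    have hrec : Complex.Gamma (μ + ((n:ℕ)+1 : ℕ) + 1) = (μ + n + 1) * Complex.Gamma (μ + n + 1) := by
      have h := Complex.Gamma_add_one (μ + n + 1) hne
      rw [← h]
      congr 1
      push_cast
      ring
    rw [hrec, norm_mul]
    have h1 : (n + 1 : ℝ) ≤ ‖(μ + n + 1 : ℂ)‖ := by
      have := Complex.re_le_norm (μ + n + 1)
      simp only [Complex.add_re, Complex.natCast_re, Complex.one_re] at this
      calc (n + 1 : ℝ) ≤ μ.re + n + 1 := by linarith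
        _ ≤ ‖(μ + n + 1 : ℂ)‖ := this
    calc ((n+1).factorial : ℝ) * ‖Complex.Gamma (μ + 1)‖
        = (n + 1 : ℝ) * ((n.factorial : ℝ) * ‖Complex.Gamma (μ + 1)‖) := by
          rw [Nat.factorial_succ]; push_cast; ring
      _ ≤ ‖(μ + n + 1 : ℂ)‖ * ‖Complex.Gamma (μ + n + 1)‖ := by
          apply mul_le_mul h1 ih (by positivity) (norm_nonneg _)

lemma aux_summable_sq {t : ℝ} (ht : 0 ≤ t) :
    Summable (fun n : ℕ => (t ^ n / n.factorial) ^ 2) := by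
  apply Summable.of_nonneg_of_le (fun n => by positivity)
    (fun n => ?_) (Real.summable_pow_div_factorial (t^2))
  have h1 : (1 : ℝ) ≤ (n.factorial : ℝ) := by exact_mod_cast Nat.one_le_iff_ne_zero.mpr n.factorial_ne_zero
  have h2 : (n.factorial : ℝ) ≤ (n.factorial : ℝ)^2 := by nlinarith
  calc (t ^ n / n.factorial) ^ 2 = t ^ (2*n) / ((n.factorial : ℝ)^2) := by
        rw [div_pow, ← pow_mul]; ring_nf
    _ ≤ t ^ (2*n) / (n.factorial : ℝ) := by
        apply div_le_div_of_nonneg_left (by positivity) (by positivity) h2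
    _ = (t^2) ^ n / n.factorial := by rw [pow_mul]

lemma aux_tsum_sq_le {t : ℝ} (ht : 0 ≤ t) :
    (∑' n : ℕ, (t ^ n / n.factorial) ^ 2) ≤ Real.exp (2 * t) := by
  have hsum : Summable (fun n : ℕ => t ^ n / n.factorial) := Real.summable_pow_div_factorial t
  have hexp : (∑' n : ℕ, t ^ n / (n.factorial : ℝ)) = Real.exp t := by
    rw [Real.exp_eq_exp_ℝ, NormedSpace.exp_eq_tsum_div]
  have hle : ∀ n : ℕ, (t ^ n / n.factorial) ^ 2 ≤ (t ^ n / n.factorial) * Real.exp t := by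
    intro n
    have h1 : t ^ n / n.factorial ≤ Real.exp t := by
      rw [← hexp]
      exact Summable.le_tsum hsum n (fun m _ => by positivity)
    have h2 : (0:ℝ) ≤ t ^ n / n.factorial := by positivity
    nlinarith
  calc (∑' n : ℕ, (t ^ n / n.factorial) ^ 2)
      ≤ ∑' n : ℕ, (t ^ n / n.factorial) * Real.exp t := by
        apply Summable.tsum_le_tsum hle (aux_summable_sq ht) (hsum.mul_right _)
    _ = Real.exp t * Real.exp t := by rw [tsum_mul_right, hexp]
    _ = Real.exp (2 * t) := by rw [← Real.exp_add]; ring_nf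

lemma aux_term_norm (μ : ℂ) (hμ : 0 ≤ μ.re) {ξ : ℝ} (hξ : 0 < ξ) (n : ℕ) :
    ‖((ξ:ℂ)/2) ^ (μ + 2*(n:ℂ)) / ((n.factorial : ℂ) * Complex.Gamma (μ + n + 1))‖ ≤
    (ξ/2) ^ μ.re / ‖Complex.Gamma (μ+1)‖ * ((ξ/2)^n / n.factorial)^2 := by
  have hξ2 : 0 < ξ/2 := by linarith
  have hG1 : 0 < ‖Complex.Gamma (μ+1)‖ := by
    rw [norm_pos_iff]
    exact Complex.Gamma_ne_zero_of_re_pos (by simp; linarith)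
  have hGn : 0 < ‖Complex.Gamma (μ+n+1)‖ := by
    rw [norm_pos_iff]
    apply Complex.Gamma_ne_zero_of_re_pos
    simp only [Complex.add_re, Complex.natCast_re, Complex.one_re]
    have : (0:ℝ) ≤ (n:ℝ) := n.cast_nonneg
    linarith
  have hfacpos : (0:ℝ) < (n.factorial : ℝ) := by exact_mod_cast n.factorial_pos
  have hnum : ‖((ξ:ℂ)/2) ^ (μ + 2*(n:ℂ))‖ = (ξ/2)^μ.re * ((ξ/2)^n)^2 := by
    have hb : ((ξ:ℂ)/2) = ((ξ/2 : ℝ) : ℂ) := by push_cast; ring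
    rw [hb, Complex.norm_cpow_eq_rpow_re_of_pos hξ2]
    have hre : (μ + 2*(n:ℂ)).re = μ.re + (2*n : ℕ) := by
      push_cast
      simp [Complex.add_re, Complex.mul_re]
    rw [hre, Real.rpow_add hξ2, Real.rpow_natCast]
    congr 1
    rw [← pow_mul]
    ring_nf
  rw [norm_div, hnum, norm_mul, Complex.norm_natCast]
  calc (ξ/2)^μ.re * ((ξ/2)^n)^2 / ((n.factorial : ℝ) * ‖Complex.Gamma (μ+n+1)‖)
      ≤ (ξ/2)^μ.re * ((ξ/2)^n)^2 / ((n.factorial : ℝ) * ((n.factorial : ℝ) * ‖Complex.Gamma (μ+1)‖)) := by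
        apply div_le_div_of_nonneg_left (by positivity) (by positivity)
        exact mul_le_mul_of_nonneg_left (aux_gamma_lb μ hμ n) hfacpos.le
    _ = (ξ/2) ^ μ.re / ‖Complex.Gamma (μ+1)‖ * ((ξ/2)^n / n.factorial)^2 := by
        field_simp

lemma aux_term_summable (μ : ℂ) (hμ : 0 ≤ μ.re) {ξ : ℝ} (hξ : 0 < ξ) :
    Summable (fun n : ℕ =>
      ‖((ξ:ℂ)/2) ^ (μ + 2*(n:ℂ)) / ((n.factorial : ℂ) * Complex.Gamma (μ + n + 1))‖) := by
  apply Summable.of_nonneg_of_le (fun n => norm_nonneg _) (aux_term_norm μ hμ hξ)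
  exact (aux_summable_sq (by linarith : (0:ℝ) ≤ ξ/2)).mul_left _

lemma aux_besselI_norm (μ : ℂ) (hμ : 0 ≤ μ.re) {ξ : ℝ} (hξ : 0 < ξ) :
    ‖besselI μ ξ‖ ≤ (ξ/2) ^ μ.re / ‖Complex.Gamma (μ+1)‖ * Real.exp ξ := by
  have hsum := aux_term_summable μ hμ hξ
  calc ‖besselI μ ξ‖ ≤ ∑' n : ℕ,
        ‖((ξ:ℂ)/2) ^ (μ + 2*(n:ℂ)) / ((n.factorial : ℂ) * Complex.Gamma (μ + n + 1))‖ :=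
        norm_tsum_le_tsum_norm hsum
    _ ≤ ∑' n : ℕ, (ξ/2) ^ μ.re / ‖Complex.Gamma (μ+1)‖ * ((ξ/2)^n / n.factorial)^2 := by
        apply Summable.tsum_le_tsum (aux_term_norm μ hμ hξ) hsum
        exact (aux_summable_sq (by linarith : (0:ℝ) ≤ ξ/2)).mul_left _
    _ = (ξ/2) ^ μ.re / ‖Complex.Gamma (μ+1)‖ * ∑' n : ℕ, ((ξ/2)^n / n.factorial)^2 := by
        rw [tsum_mul_left]
    _ ≤ (ξ/2) ^ μ.re / ‖Complex.Gamma (μ+1)‖ * Real.exp ξ := by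
        have h := aux_tsum_sq_le (by linarith : (0:ℝ) ≤ ξ/2)
        have : Real.exp (2 * (ξ/2)) = Real.exp ξ := by ring_nf
        rw [this] at h
        exact mul_le_mul_of_nonneg_left h (by positivity)

/-- interval bound for rpow -/
lemma aux_rpow_between {t m P r : ℝ} (ht : 0 < t) (hm : m ≤ r) (hP : r ≤ P) :
    t ^ r ≤ t ^ m + t ^ P := by
  rcases le_total t 1 with h1 | h1
  · have : t ^ r ≤ t ^ m := Real.rpow_le_rpow_of_exponent_ge ht h1 hm
    have h2 : (0:ℝ) ≤ t ^ P := (Real.rpow_pos_of_pos ht P).le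
    linarith
  · have : t ^ r ≤ t ^ P := Real.rpow_le_rpow_of_exponent_le h1 hP
    have h2 : (0:ℝ) ≤ t ^ m := (Real.rpow_pos_of_pos ht m).le
    linarith

lemma aux_besselI_bound (μ : ℂ) {m P C : ℝ} (h0 : 0 ≤ μ.re) (hm : m ≤ μ.re) (hP : μ.re ≤ P)
    (hC : ‖(Complex.Gamma (μ+1))⁻¹‖ ≤ C) {ξ : ℝ} (hξ : 0 < ξ) :
    ‖besselI μ ξ‖ ≤ (ξ/2) ^ m * C * Real.exp ξ + (ξ/2) ^ P * C * Real.exp ξ := by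
  have hξ2 : 0 < ξ/2 := by linarith
  have h := aux_besselI_norm μ h0 hξ
  have hCnn : 0 ≤ C := le_trans (norm_nonneg _) hC
  have key : (ξ/2) ^ μ.re / ‖Complex.Gamma (μ+1)‖ ≤ ((ξ/2) ^ m + (ξ/2) ^ P) * C := by
    rw [div_eq_mul_inv, ← norm_inv]
    apply mul_le_mul (aux_rpow_between hξ2 hm hP) hC (norm_nonneg _)
    positivity
  calc ‖besselI μ ξ‖ ≤ (ξ/2) ^ μ.re / ‖Complex.Gamma (μ+1)‖ * Real.exp ξ := h
    _ ≤ ((ξ/2) ^ m + (ξ/2) ^ P) * C * Real.exp ξ := by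
        apply mul_le_mul_of_nonneg_right key (Real.exp_nonneg _)
    _ = (ξ/2) ^ m * C * Real.exp ξ + (ξ/2) ^ P * C * Real.exp ξ := by ring

lemma aux_term_bound (μ : ℂ) {m P C : ℝ} (h0 : 0 ≤ μ.re) (hm : m ≤ μ.re) (hP : μ.re ≤ P)
    (hC : ‖(Complex.Gamma (μ+1))⁻¹‖ ≤ C) {ξ : ℝ} (hξ : 0 < ξ) (n : ℕ) :
    ‖((ξ:ℂ)/2) ^ (μ + 2*(n:ℂ)) / ((n.factorial : ℂ) * Complex.Gamma (μ + n + 1))‖ ≤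
      ((ξ/2) ^ m + (ξ/2) ^ P) * C * ((ξ/2)^n / n.factorial)^2 := by
  have hξ2 : 0 < ξ/2 := by linarith
  have hCnn : 0 ≤ C := le_trans (norm_nonneg _) hC
  have key : (ξ/2) ^ μ.re / ‖Complex.Gamma (μ+1)‖ ≤ ((ξ/2) ^ m + (ξ/2) ^ P) * C := by
    rw [div_eq_mul_inv, ← norm_inv]
    apply mul_le_mul (aux_rpow_between hξ2 hm hP) hC (norm_nonneg _)
    positivity
  calc ‖((ξ:ℂ)/2) ^ (μ + 2*(n:ℂ)) / ((n.factorial : ℂ) * Complex.Gamma (μ + n + 1))‖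
      ≤ (ξ/2) ^ μ.re / ‖Complex.Gamma (μ+1)‖ * ((ξ/2)^n / n.factorial)^2 :=
        aux_term_norm μ h0 hξ n
    _ ≤ ((ξ/2) ^ m + (ξ/2) ^ P) * C * ((ξ/2)^n / n.factorial)^2 := by
        apply mul_le_mul_of_nonneg_right key (by positivity)

lemma aux_term_diff {U : Set ℂ} (hU : IsOpen U) {g : ℂ → ℂ} (hg : DifferentiableOn ℂ g U)
    {ξ : ℝ} (hξ : 0 < ξ) (n : ℕ) :
    DifferentiableOn ℂ (fun ν =>
      ((ξ:ℂ)/2) ^ (g ν + 2*(n:ℂ)) / ((n.factorial : ℂ) * Complex.Gamma (g ν + n + 1))) U := by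
  have hb : ((ξ:ℂ)/2) ≠ 0 := by
    have : ((ξ:ℂ)/2) = ((ξ/2 : ℝ) : ℂ) := by push_cast; ring
    rw [this, Complex.ofReal_ne_zero]
    positivity
  intro ν hν
  have hgat : DifferentiableAt ℂ g ν := (hg ν hν).differentiableAt (hU.mem_nhds hν)
  apply DifferentiableAt.differentiableWithinAt
  have h1 : DifferentiableAt ℂ (fun ν => ((ξ:ℂ)/2) ^ (g ν + 2*(n:ℂ))) ν :=
    (hgat.add_const _).const_cpow (Or.inl hb)
  have h2 : DifferentiableAt ℂ (fun ν => (Complex.Gamma (g ν + (n:ℂ) + 1))⁻¹) ν :=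
    (Complex.differentiable_one_div_Gamma ((g ν) + n + 1)).comp (f := fun ν => g ν + (n:ℂ) + 1) ν
      ((hgat.add_const _).add_const _)
  have heq : (fun ν => ((ξ:ℂ)/2) ^ (g ν + 2*(n:ℂ)) / ((n.factorial : ℂ) * Complex.Gamma (g ν + n + 1)))
      = fun ν => ((ξ:ℂ)/2) ^ (g ν + 2*(n:ℂ)) * ((n.factorial : ℂ))⁻¹ * (Complex.Gamma (g ν + (n:ℂ) + 1))⁻¹ := by
    funext w
    rw [div_eq_mul_inv, mul_inv]
    ring
  rw [heq]
  exact (h1.mul (differentiableAt_const _)).mul h2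

lemma aux_besselI_diff {ν₀ : ℂ} {r : ℝ} {g : ℂ → ℂ} (hg : DifferentiableOn ℂ g (Metric.ball ν₀ r))
    {m P C : ℝ}
    (hb : ∀ ν ∈ Metric.ball ν₀ r, 0 ≤ (g ν).re ∧ m ≤ (g ν).re ∧ (g ν).re ≤ P ∧
      ‖(Complex.Gamma (g ν + 1))⁻¹‖ ≤ C)
    {ξ : ℝ} (hξ : 0 < ξ) :
    DifferentiableOn ℂ (fun ν => besselI (g ν) ξ) (Metric.ball ν₀ r) := by
  have hξ2 : (0:ℝ) ≤ ξ/2 := by linarith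
  unfold besselI
  apply Complex.differentiableOn_tsum_of_summable_norm
    (u := fun n : ℕ => ((ξ/2) ^ m + (ξ/2) ^ P) * C * ((ξ/2)^n / n.factorial)^2)
  · exact (aux_summable_sq hξ2).mul_left _
  · exact fun n => aux_term_diff Metric.isOpen_ball hg hξ n
  · exact Metric.isOpen_ball
  · intro n ν hν
    obtain ⟨h0, hm, hP, hC⟩ := hb ν hν
    exact aux_term_bound (g ν) h0 hm hP hC hξ n

lemma aux_besselI_meas (μ : ℂ) (hμ : 0 ≤ μ.re) {a : ℝ} (ha : 0 < a) :
    AEStronglyMeasurable (fun x : ℝ => besselI μ (x/a)) (volume.restrict (Ioi (0:ℝ))) := by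
  apply aestronglyMeasurable_of_tendsto_ae (u := atTop)
    (f := fun (N : ℕ) (x : ℝ) => ∑ n ∈ Finset.range N,
      (((x/a : ℝ) : ℂ)/2) ^ (μ + 2*(n:ℂ)) / ((n.factorial : ℂ) * Complex.Gamma (μ + n + 1)))
  · intro N
    apply ContinuousOn.aestronglyMeasurable ?_ measurableSet_Ioi
    apply continuousOn_finset_sum
    intro n _
    apply ContinuousOn.div_const
    intro x hx
    apply ContinuousAt.continuousWithinAt
    have hbase : ContinuousAt (fun x : ℝ => ((x/a : ℝ) : ℂ)/2) x := by
      apply Continuous.continuousAt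
      exact (Complex.continuous_ofReal.comp (continuous_id.div_const a)).div_const 2
    have hsp : (((x/a : ℝ) : ℂ)/2) ∈ Complex.slitPlane := by
      apply Complex.mem_slitPlane_iff.mpr
      left
      have : (((x/a : ℝ) : ℂ)/2).re = x/a/2 := by
        simp [Complex.div_re]
        rw [mul_div_mul_right _ _ ha.ne']
      rw [this]
      have : 0 < x := hx
      positivity
    exact ContinuousAt.comp (g := fun w : ℂ => w ^ (μ + 2*(n:ℂ)))
      (f := fun x : ℝ => ((x/a : ℝ) : ℂ)/2) (continuousAt_cpow_const hsp) hbase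
  · filter_upwards [ae_restrict_mem measurableSet_Ioi] with x hx
    have hxa : 0 < x/a := div_pos hx ha
    have hsum := (aux_term_summable μ hμ hxa).of_norm
    exact hsum.hasSum.tendsto_sum_nat

set_option maxHeartbeats 1000000 in
theorem stmt5 (a : ℝ) (ha : 0 < a) (z : ℂ) (hz : 2 ≤ z.re) :
    DifferentiableOn ℂ (fun ν : ℂ => Dnu ν a z) {ν : ℂ | |ν.im| < 1} := by
  intro ν₀ hν₀
  apply DifferentiableAt.differentiableWithinAt
  have hν₀im : |ν₀.im| < 1 := hν₀
  have him0 : (0:ℝ) ≤ |ν₀.im| := abs_nonneg _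
  set ε : ℝ := (1 - |ν₀.im|)/4 with hεdef
  have hε : 0 < ε := by rw [hεdef]; linarith
  have hεle : ε ≤ 1/4 := by rw [hεdef]; linarith
  set μm : ℂ → ℂ := fun ν => (2*z + ν^2) ^ (1/2 : ℂ) with hμm
  set K := Metric.closedBall ν₀ (2*ε) with hKdef
  have hν₀K : ν₀ ∈ K := Metric.mem_closedBall_self (by linarith)
  have hKim : ∀ ν ∈ K, |ν.im| ≤ |ν₀.im| + 2*ε := by
    intro ν hν
    have h1 : ‖ν - ν₀‖ ≤ 2*ε := by
      rw [← Complex.dist_eq]; exact Metric.mem_closedBall.mp hν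
    have h2 : |ν.im - ν₀.im| ≤ ‖ν - ν₀‖ := by
      have := Complex.abs_im_le_norm (ν - ν₀)
      simpa [Complex.sub_im] using this
    have h3 : |ν.im| ≤ |ν₀.im| + |ν.im - ν₀.im| := by
      have := abs_add_le ν₀.im (ν.im - ν₀.im)
      simpa using this
    linarith
  have hKre : ∀ ν ∈ K, |ν.re - ν₀.re| ≤ 2*ε := by
    intro ν hν
    have h1 : ‖ν - ν₀‖ ≤ 2*ε := by
      rw [← Complex.dist_eq]; exact Metric.mem_closedBall.mp hν
    have h2 : |ν.re - ν₀.re| ≤ ‖ν - ν₀‖ := by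
      have := Complex.abs_re_le_norm (ν - ν₀)
      simpa [Complex.sub_re] using this
    linarith
  have hKim1 : ∀ ν ∈ K, |ν.im| < 1 := by
    intro ν hν
    have h := hKim ν hν
    have h2 : ε = (1 - |ν₀.im|)/4 := hεdef
    linarith
  have hwre : ∀ ν ∈ K, 3 ≤ (2*z + ν^2).re := by
    intro ν hν
    have him := hKim1 ν hν
    have hre : (2*z + ν^2).re = 2*z.re + (ν.re*ν.re - ν.im*ν.im) := by
      simp [pow_two, Complex.add_re, Complex.mul_re]
      try ring
    rw [hre]
    have h1 : ν.im * ν.im < 1 := by nlinarith [abs_nonneg ν.im, le_abs_self (ν.im), neg_abs_le (ν.im)]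
    nlinarith [mul_self_nonneg ν.re]
  have hwne : ∀ ν ∈ K, 2*z + ν^2 ≠ 0 := by
    intro ν hν h
    have := hwre ν hν
    rw [h] at this
    simp at this
    linarith
  have hsq : ∀ ν ∈ K, (μm ν).re * (μm ν).re - (μm ν).im * (μm ν).im = (2*z + ν^2).re := by
    intro ν hν
    have h := aux_sqrt_mul_self (hwne ν hν)
    have := congrArg Complex.re h
    simpa [Complex.mul_re, hμm] using this
  have hμ0 : ∀ ν ∈ K, 0 ≤ (μm ν).re := fun ν _ => aux_re_sqrt_nonneg _
  have hμ1 : ∀ ν ∈ K, 1 ≤ (μm ν).re := by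
    intro ν hν
    have h1 := hsq ν hν
    have h2 := hwre ν hν
    have h3 := hμ0 ν hν
    nlinarith [mul_self_nonneg ((μm ν).im)]
  have hμlow : ∀ ν ∈ K, -ν₀.re - 2*ε ≤ (μm ν).re := by
    intro ν hν
    have h1 := hsq ν hν
    have h3 := hμ0 ν hν
    have h4 := hKre ν hν
    have h5 : ν.re * ν.re + 3 ≤ (2*z + ν^2).re := by
      have him := hKim1 ν hν
      have hre : (2*z + ν^2).re = 2*z.re + (ν.re*ν.re - ν.im*ν.im) := by
        simp [pow_two, Complex.add_re, Complex.mul_re]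
        try ring
      rw [hre]
      nlinarith [le_abs_self ν.im, neg_abs_le ν.im, abs_nonneg ν.im]
    have h6 : -ν.re ≤ (μm ν).re := by
      nlinarith [mul_self_nonneg ((μm ν).im), mul_self_nonneg ((μm ν).re + ν.re)]
    have h7 : -ν₀.re - 2*ε ≤ -ν.re := by
      have := abs_le.mp h4
      linarith [this.1, this.2]
    linarith
  -- continuity of μm on K
  have hμcont : ContinuousOn μm K := by
    intro ν hν
    apply ContinuousAt.continuousWithinAt
    have hsp : (2*z + ν^2) ∈ Complex.slitPlane := by
      apply Complex.mem_slitPlane_iff.mpr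
      left; linarith [hwre ν hν]
    exact ContinuousAt.comp (g := fun w : ℂ => w ^ (1/2 : ℂ))
      (f := fun ν : ℂ => 2*z + ν^2) (continuousAt_cpow_const hsp)
      ((continuous_const.add (continuous_pow 2)).continuousAt)
  -- upper bound P on re μm over K
  obtain ⟨νP, hνPK, hνP⟩ := (isCompact_closedBall ν₀ (2*ε)).exists_isMaxOn ⟨ν₀, hν₀K⟩
    (Complex.continuous_re.comp_continuousOn hμcont)
  set P := (μm νP).re with hPdef
  have hP : ∀ ν ∈ K, (μm ν).re ≤ P := fun ν hν => hνP hν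
  -- bound C on Gamma inverse over K
  obtain ⟨νC, hνCK, hνC⟩ := (isCompact_closedBall ν₀ (2*ε)).exists_isMaxOn ⟨ν₀, hν₀K⟩
    (((Complex.differentiable_one_div_Gamma.continuous).comp_continuousOn
      (hμcont.add continuousOn_const)).norm)
  set C := ‖(Complex.Gamma (μm νC + 1))⁻¹‖ with hCdef
  have hC : ∀ ν ∈ K, ‖(Complex.Gamma (μm ν + 1))⁻¹‖ ≤ C := fun ν hν => hνC hν
  have hC0 : 0 ≤ C := norm_nonneg _
  set m : ℝ := -ν₀.re - 2*ε with hmdef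
  set r₁ : ℝ := ν₀.re + 3 - 2*ε with hr₁def
  set r₂ : ℝ := ν₀.re + 3 + 2*ε with hr₂def
  have hmP : m ≤ P := le_trans (hμlow ν₀ hν₀K) (hP ν₀ hν₀K)
  have hr₁m : (2:ℝ) ≤ r₁ + m := by rw [hr₁def, hmdef]; linarith
  -- differentiability of μm on the open ball
  have hballK : Metric.ball ν₀ (2*ε) ⊆ K := Metric.ball_subset_closedBall
  have hμdiff : DifferentiableOn ℂ μm (Metric.ball ν₀ (2*ε)) := by
    intro ν hν
    apply DifferentiableAt.differentiableWithinAt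
    have hsp : (2*z + ν^2) ∈ Complex.slitPlane := by
      apply Complex.mem_slitPlane_iff.mpr
      left; linarith [hwre ν (hballK hν)]
    exact DifferentiableAt.cpow ((differentiableAt_const _).add (differentiableAt_pow 2))
      (differentiableAt_const _) hsp
  -- F and bound
  set F : ℂ → ℝ → ℂ := fun ν x =>
    Complex.exp (-(x ^ 2 : ℝ) / (2 * a)) * (x : ℂ) ^ (ν + 3) *
      besselI ((2 * z + ν ^ 2) ^ (1 / 2 : ℂ)) (x / a) with hFdef
  set Bnd : ℝ → ℝ := fun x =>
    Real.exp (1/a) * ((x^r₁ + x^r₂) * ((x/(2*a))^m + (x/(2*a))^P) * C) *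
      Real.exp (-(1/(4*a)) * x^2) with hBnddef
  have hFle : ∀ x ∈ Ioi (0:ℝ), ∀ ν ∈ K, ‖F ν x‖ ≤ Bnd x := by
    intro x hx ν hν
    have hx0 : (0:ℝ) < x := hx
    have hxa : 0 < x/a := div_pos hx0 ha
    have h2a : (x/a)/2 = x/(2*a) := by ring
    -- exp factor
    have he : ‖Complex.exp (-(x ^ 2 : ℝ) / (2 * (a:ℂ)))‖ = Real.exp (-(x^2)/(2*a)) := by
      have h1 : (-(x^2:ℝ) : ℂ) / (2*(a:ℂ)) = ((-(x^2)/(2*a) : ℝ) : ℂ) := by push_cast; ring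
      rw [h1, Complex.norm_exp_ofReal]
    -- power factor
    have hp : ‖(x:ℂ) ^ (ν + 3)‖ ≤ x^r₁ + x^r₂ := by
      rw [Complex.norm_cpow_eq_rpow_re_of_pos hx0]
      have hre : (ν + 3 : ℂ).re = ν.re + 3 := by simp
      rw [hre]
      have := abs_le.mp (hKre ν hν)
      exact aux_rpow_between hx0 (by rw [hr₁def]; linarith [this.1]) (by rw [hr₂def]; linarith [this.2])
    -- bessel factor
    have hbb : ‖besselI ((2 * z + ν ^ 2) ^ (1 / 2 : ℂ)) (x / a)‖ ≤
        ((x/(2*a))^m + (x/(2*a))^P) * C * Real.exp (x/a) := by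
      have h := aux_besselI_bound (μm ν) (hμ0 ν hν) (hμlow ν hν) (hP ν hν) (hC ν hν) hxa
      rw [h2a] at h
      calc ‖besselI (μm ν) (x/a)‖ ≤
            (x/(2*a)) ^ m * C * Real.exp (x/a) + (x/(2*a)) ^ P * C * Real.exp (x/a) := h
        _ = ((x/(2*a))^m + (x/(2*a))^P) * C * Real.exp (x/a) := by ring
    have hexps : Real.exp (-(x^2)/(2*a)) * Real.exp (x/a) ≤
        Real.exp (1/a) * Real.exp (-(1/(4*a)) * x^2) := by
      rw [← Real.exp_add, ← Real.exp_add]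
      apply Real.exp_le_exp.mpr
      have key : -(x^2)/(2*a) + x/a - (1/a + -(1/(4*a)) * x^2) = -((x-2)^2)/(4*a) := by
        field_simp
        ring
      have h0 : 0 ≤ ((x-2)^2)/(4*a) := by positivity
      have h0' : -((x-2):ℝ)^2/(4*a) = -(((x-2)^2)/(4*a)) := by ring
      linarith [key, h0, h0'.le, h0'.ge]
    have hpnn : (0:ℝ) ≤ x^r₁ + x^r₂ := by positivity
    have hbnn : (0:ℝ) ≤ ((x/(2*a))^m + (x/(2*a))^P) * C * Real.exp (x/a) := by positivity
    calc ‖F ν x‖ = Real.exp (-(x^2)/(2*a)) * ‖(x:ℂ) ^ (ν + 3)‖ *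
          ‖besselI ((2 * z + ν ^ 2) ^ (1 / 2 : ℂ)) (x / a)‖ := by
          rw [hFdef]
          simp only [norm_mul]
          rw [he]
      _ ≤ Real.exp (-(x^2)/(2*a)) * (x^r₁ + x^r₂) *
          (((x/(2*a))^m + (x/(2*a))^P) * C * Real.exp (x/a)) := by
          apply mul_le_mul
          · exact mul_le_mul_of_nonneg_left hp (Real.exp_nonneg _)
          · exact hbb
          · exact norm_nonneg _
          · positivity
      _ = (x^r₁ + x^r₂) * (((x/(2*a))^m + (x/(2*a))^P) * C) *
          (Real.exp (-(x^2)/(2*a)) * Real.exp (x/a)) := by ring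
      _ ≤ (x^r₁ + x^r₂) * (((x/(2*a))^m + (x/(2*a))^P) * C) *
          (Real.exp (1/a) * Real.exp (-(1/(4*a)) * x^2)) := by
          apply mul_le_mul_of_nonneg_left hexps (by positivity)
      _ = Bnd x := by rw [hBnddef]; ring
  -- integrability of the bound
  have hb4 : (0:ℝ) < 1/(4*a) := by positivity
  have master : ∀ s : ℝ, -1 < s →
      IntegrableOn (fun x : ℝ => x ^ s * Real.exp (-(1/(4*a)) * x^2)) (Ioi 0) :=
    fun s hs => integrableOn_rpow_mul_exp_neg_mul_sq hb4 hs
  have hr₂r₁ : r₁ ≤ r₂ := by rw [hr₁def, hr₂def]; linarith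
  have hs1 : (-1:ℝ) < r₁ + m := by linarith
  have hs2 : (-1:ℝ) < r₁ + P := by linarith
  have hs3 : (-1:ℝ) < r₂ + m := by linarith
  have hs4 : (-1:ℝ) < r₂ + P := by linarith
  set g : ℝ → ℝ := fun x => Real.exp (1/a) * C *
      (((2*a)^(-m) * (x^(r₁+m) * Real.exp (-(1/(4*a)) * x^2)) +
        (2*a)^(-P) * (x^(r₁+P) * Real.exp (-(1/(4*a)) * x^2))) +
       ((2*a)^(-m) * (x^(r₂+m) * Real.exp (-(1/(4*a)) * x^2)) +
        (2*a)^(-P) * (x^(r₂+P) * Real.exp (-(1/(4*a)) * x^2)))) with hgdef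
  have hg_int : IntegrableOn g (Ioi 0) := by
    apply Integrable.const_mul
    exact (((master _ hs1).const_mul _).add ((master _ hs2).const_mul _)).add
      (((master _ hs3).const_mul _).add ((master _ hs4).const_mul _))
  have hBg : EqOn Bnd g (Ioi 0) := by
    intro x hx
    have hx0 : (0:ℝ) < x := hx
    have h2a0 : (0:ℝ) ≤ 2*a := by positivity
    have e1 : (x/(2*a))^m = x^m * ((2*a):ℝ)^(-m) := by
      rw [Real.div_rpow hx0.le h2a0, Real.rpow_neg h2a0, div_eq_mul_inv]
    have e2 : (x/(2*a))^P = x^P * ((2*a):ℝ)^(-P) := by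
      rw [Real.div_rpow hx0.le h2a0, Real.rpow_neg h2a0, div_eq_mul_inv]
    have e3 : x^(r₁+m) = x^r₁ * x^m := Real.rpow_add hx0 _ _
    have e4 : x^(r₁+P) = x^r₁ * x^P := Real.rpow_add hx0 _ _
    have e5 : x^(r₂+m) = x^r₂ * x^m := Real.rpow_add hx0 _ _
    have e6 : x^(r₂+P) = x^r₂ * x^P := Real.rpow_add hx0 _ _
    simp only [hBnddef, hgdef, e1, e2, e3, e4, e5, e6]
    ring
  have hBint : IntegrableOn Bnd (Ioi 0) := (hg_int.congr_fun (fun x hx => (hBg hx).symm)) measurableSet_Ioi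
  -- differentiability of F in ν
  have hFdiff : ∀ x ∈ Ioi (0:ℝ), DifferentiableOn ℂ (fun ν => F ν x) (Metric.ball ν₀ (2*ε)) := by
    intro x hx
    have hx0 : (0:ℝ) < x := hx
    have hd1 : DifferentiableOn ℂ (fun ν : ℂ => (x:ℂ) ^ (ν+3)) (Metric.ball ν₀ (2*ε)) := by
      intro ν _
      exact ((differentiableAt_id.add_const (3:ℂ)).const_cpow
        (Or.inl (Complex.ofReal_ne_zero.mpr hx0.ne'))).differentiableWithinAt
    have hd2 : DifferentiableOn ℂ (fun ν => besselI (μm ν) (x/a)) (Metric.ball ν₀ (2*ε)) :=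
      aux_besselI_diff hμdiff
        (fun ν hν => ⟨hμ0 ν (hballK hν), hμlow ν (hballK hν), hP ν (hballK hν), hC ν (hballK hν)⟩)
        (div_pos hx0 ha)
    exact ((differentiableOn_const _).mul hd1).mul hd2
  -- measurability of F ν in x
  have hmeas : ∀ ν ∈ Metric.ball ν₀ (2*ε),
      AEStronglyMeasurable (F ν) (volume.restrict (Ioi (0:ℝ))) := by
    intro ν hν
    have h1 : AEStronglyMeasurable (fun x : ℝ => Complex.exp (-((x:ℝ)^2 : ℝ) / (2 * (a:ℂ))))
        (volume.restrict (Ioi (0:ℝ))) := by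
      apply Continuous.aestronglyMeasurable
      exact Complex.continuous_exp.comp
        (((Complex.continuous_ofReal.comp (continuous_pow 2)).neg).div_const (2*(a:ℂ)))
    have h2 : AEStronglyMeasurable (fun x : ℝ => ((x:ℝ):ℂ) ^ (ν+3))
        (volume.restrict (Ioi (0:ℝ))) := by
      apply ContinuousOn.aestronglyMeasurable ?_ measurableSet_Ioi
      intro x hx
      apply ContinuousAt.continuousWithinAt
      have hsp : ((x:ℝ):ℂ) ∈ Complex.slitPlane := by
        apply Complex.mem_slitPlane_iff.mpr
        left; simpa using (hx : (0:ℝ) < x)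
      exact ContinuousAt.comp (g := fun w : ℂ => w ^ (ν+3)) (f := fun x : ℝ => ((x:ℝ):ℂ))
        (continuousAt_cpow_const hsp) Complex.continuous_ofReal.continuousAt
    have h3 := aux_besselI_meas (μm ν) (hμ0 ν (hballK hν)) ha
    exact (h1.mul h2).mul h3
  have hν₀ball : ν₀ ∈ Metric.ball ν₀ (2*ε) := Metric.mem_ball_self (by positivity)
  -- apply dominated differentiation
  have key := hasDerivAt_integral_of_dominated_loc_of_deriv_le (μ := volume.restrict (Ioi (0:ℝ)))
      (F := F) (F' := fun ν x => deriv (fun ν' => F ν' x) ν) (x₀ := ν₀)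
      (bound := fun x => Bnd x / (ε/2)) (Metric.ball_mem_nhds ν₀ hε)
      (by
        filter_upwards [Metric.ball_mem_nhds ν₀ (by positivity : (0:ℝ) < 2*ε)] with ν hν
        exact hmeas ν hν)
      (by
        apply Integrable.mono' hBint (hmeas ν₀ hν₀ball)
        filter_upwards [ae_restrict_mem measurableSet_Ioi] with x hx
        exact hFle x hx ν₀ hν₀K)
      (by
        -- measurability of the derivative via difference quotients
        set u : ℕ → ℂ := fun k => ((ε/(2*((k:ℝ)+1)) : ℝ) : ℂ) with hudef
        have hupos : ∀ k : ℕ, (0:ℝ) < ε/(2*((k:ℝ)+1)) := by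
          intro k
          have : (0:ℝ) < (k:ℝ) + 1 := by positivity
          positivity
        have hu0 : ∀ k, u k ≠ 0 := fun k => Complex.ofReal_ne_zero.mpr (hupos k).ne'
        have humem : ∀ k, ν₀ + u k ∈ Metric.ball ν₀ (2*ε) := by
          intro k
          rw [Metric.mem_ball, dist_eq_norm, add_sub_cancel_left, hudef]
          rw [Complex.norm_real, Real.norm_eq_abs, abs_of_pos (hupos k)]
          have h1 : (2:ℝ) ≤ 2*((k:ℝ)+1) := by
            have : (0:ℝ) ≤ (k:ℝ) := Nat.cast_nonneg k
            linarith
          have h2 : ε/(2*((k:ℝ)+1)) ≤ ε/2 :=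
            div_le_div_of_nonneg_left hε.le (by norm_num) h1
          linarith
        have hulim : Tendsto (fun k : ℕ => ν₀ + u k) atTop (𝓝[≠] ν₀) := by
          apply tendsto_nhdsWithin_of_tendsto_nhds_of_eventually_within
          · have hreal : Tendsto (fun k : ℕ => ε/(2*((k:ℝ)+1))) atTop (𝓝 0) := by
              have h := tendsto_one_div_add_atTop_nhds_zero_nat.const_mul (ε/2)
              rw [mul_zero] at h
              convert h using 2 with k
              field_simp
            have hc : Tendsto (fun k : ℕ => u k) atTop (𝓝 (0:ℂ)) := by
              rw [hudef]
              have h2 := (Complex.continuous_ofReal.tendsto (0:ℝ)).comp hreal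
              simpa only [Function.comp_def, Complex.ofReal_zero] using h2
            have := tendsto_const_nhds (x := ν₀) (f := atTop (α := ℕ)) |>.add hc
            simpa using this
          · filter_upwards with k
            simp only [mem_compl_iff, mem_singleton_iff]
            intro h
            exact hu0 k (by simpa using h)
        apply aestronglyMeasurable_of_tendsto_ae atTop
          (f := fun (k : ℕ) (x : ℝ) => (u k)⁻¹ * (F (ν₀ + u k) x - F ν₀ x))
        · intro k
          exact ((hmeas _ (humem k)).sub (hmeas ν₀ hν₀ball)).const_mul _
        · filter_upwards [ae_restrict_mem measurableSet_Ioi] with x hx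
          have hd : HasDerivAt (fun ν' => F ν' x) (deriv (fun ν' => F ν' x) ν₀) ν₀ :=
            (((hFdiff x hx) ν₀ hν₀ball).differentiableAt
              (Metric.isOpen_ball.mem_nhds hν₀ball)).hasDerivAt
          have ht := (hasDerivAt_iff_tendsto_slope.mp hd).comp hulim
          have heq : (fun k : ℕ => (u k)⁻¹ * (F (ν₀ + u k) x - F ν₀ x)) =
              fun k : ℕ => slope (fun ν' => F ν' x) ν₀ (ν₀ + u k) := by
            funext k
            rw [slope_def_field, add_sub_cancel_left, div_eq_inv_mul]
          rw [heq]
          exact ht)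
      (by
        filter_upwards [ae_restrict_mem measurableSet_Ioi] with x hx ν hν
        have hcl : closure (Metric.ball ν (ε/2)) ⊆ Metric.ball ν₀ (2*ε) := by
          intro w hw
          have hw' : w ∈ Metric.closedBall ν (ε/2) := Metric.closure_ball_subset_closedBall hw
          rw [Metric.mem_ball]
          calc dist w ν₀ ≤ dist w ν + dist ν ν₀ := dist_triangle _ _ _
            _ ≤ ε/2 + ε := add_le_add (Metric.mem_closedBall.mp hw') (le_of_lt hν)
            _ < 2*ε := by linarith
        have hdcl : DiffContOnCl ℂ (fun ν' => F ν' x) (Metric.ball ν (ε/2)) :=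
          DifferentiableOn.diffContOnCl ((hFdiff x hx).mono hcl)
        apply Complex.norm_deriv_le_of_forall_mem_sphere_norm_le (by positivity : (0:ℝ) < ε/2) hdcl
        intro w hw
        have hwK : w ∈ K := by
          rw [hKdef, Metric.mem_closedBall]
          have h1 : dist w ν = ε/2 := Metric.mem_sphere.mp hw
          calc dist w ν₀ ≤ dist w ν + dist ν ν₀ := dist_triangle _ _ _
            _ ≤ ε/2 + ε := by rw [h1]; linarith [le_of_lt (Metric.mem_ball.mp hν)]
            _ ≤ 2*ε := by linarith
        exact hFle x hx w hwK)
      (hBint.div_const _)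
      (by
        filter_upwards [ae_restrict_mem measurableSet_Ioi] with x hx ν hν
        have hν2 : ν ∈ Metric.ball ν₀ (2*ε) :=
          Metric.ball_subset_ball (by linarith) hν
        exact (((hFdiff x hx) ν hν2).differentiableAt
          (Metric.isOpen_ball.mem_nhds hν2)).hasDerivAt)
  obtain ⟨-, hkey⟩ := key
  have hG : DifferentiableAt ℂ (fun ν => ∫ x in Ioi (0:ℝ), F ν x) ν₀ := hkey.differentiableAt
  have hshow : (fun ν : ℂ => Dnu ν a z) =
      fun ν => Complex.exp (-(1 / (2 * (a:ℂ)))) / (a:ℂ) * ∫ x in Ioi (0:ℝ), F ν x := by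
    funext ν
    unfold Dnu
    rw [hFdef]
  rw [hshow]
  exact hG.const_mul _



end
end

section
/- Let B be a standard one-dimensional Brownian motion, a > 0 and x > 0. For every complex number ν, the entire extension L(x, ν) = e^{−xν²/2} · E[(A_x^{(0)} − a)^+ · e^{ν B_x}] satisfies the majorization |L(x, ν)| ≤ e^{(x/2)·Im(ν)²} · E[A_x^{(Re(ν))}]. -/
open MeasureTheory ProbabilityTheory Set
open scoped ENNReal NNReal Real

noncomputable section

lemma gaussLint (v : ℝ≥0) (c : ℝ) :
    ∫⁻ y, ENNReal.ofReal (Real.exp (c * y)) ∂(gaussianReal 0 v) =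
      ENNReal.ofReal (Real.exp (c ^ 2 * v / 2)) := by
  rcases eq_or_ne v 0 with rfl | h
  · simp [gaussianReal_zero_var, lintegral_dirac]
  · have hv : (0:ℝ) < (v:ℝ) := by exact_mod_cast h.bot_lt
    have hg : Measurable fun y : ℝ => ENNReal.ofReal (Real.exp (c * y)) :=
      ENNReal.measurable_ofReal.comp (Real.measurable_exp.comp (measurable_id.const_mul c))
    rw [gaussianReal_of_var_ne_zero _ h,
      lintegral_withDensity_eq_lintegral_mul _ (measurable_gaussianPDF _ _) hg]
    have hreal : ∀ y : ℝ, gaussianPDFReal 0 v y * Real.exp (c * y)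
        = Real.exp (c ^ 2 * v / 2) * gaussianPDFReal (c * v) v y := by
      intro y
      unfold gaussianPDFReal
      rw [mul_assoc, ← Real.exp_add,
        show Real.exp (c ^ 2 * v / 2) * ((√(2 * π * v))⁻¹ * rexp (-(y - c * v) ^ 2 / (2 * v)))
          = (√(2 * π * v))⁻¹ * rexp (c ^ 2 * v / 2 + -(y - c * v) ^ 2 / (2 * v)) by
            rw [Real.exp_add]; ring]
      congr 1
      field_simp
      ring
    calc ∫⁻ y, (gaussianPDF 0 v * fun y => ENNReal.ofReal (Real.exp (c * y))) y
        = ∫⁻ y, ENNReal.ofReal (Real.exp (c ^ 2 * v / 2)) * gaussianPDF (c * v) v y := by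
          refine lintegral_congr fun y => ?_
          simp only [Pi.mul_apply, gaussianPDF]
          rw [← ENNReal.ofReal_mul (gaussianPDFReal_nonneg _ _ _), hreal y,
            ENNReal.ofReal_mul (Real.exp_pos _).le]
      _ = ENNReal.ofReal (Real.exp (c ^ 2 * v / 2)) * 1 := by
          rw [lintegral_const_mul _ (measurable_gaussianPDF _ _), lintegral_gaussianPDF_eq_one _ h]
      _ = _ := mul_one _

theorem stmt10 {Ω : Type*} [MeasurableSpace Ω] (μ : Measure Ω) (B : ℝ → Ω → ℝ)
    (hB : IsBrownianMotion μ B) (a x : ℝ) (ha : 0 < a) (hx : 0 < x) (ν : ℂ) :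
    ‖Complex.exp (-(x : ℂ) * ν ^ 2 / 2) *
        ∫ ω, (↑(max (yorA B 0 x ω - a) 0) : ℂ) * Complex.exp (ν * B x ω) ∂μ‖
      ≤ Real.exp (x / 2 * ν.im ^ 2) * ∫ ω, yorA B ν.re x ω ∂μ := by
  classical
  obtain ⟨hprob, hmeas, hcont, h0, hgauss, hindep⟩ := hB
  set r : ℝ := ν.re with hrdef
  set si : ℝ := ν.im with hsdef
  obtain ⟨N, hNsub, hNmeas, hNnull⟩ :=
    exists_measurable_superset_of_null (ae_iff.mp (hcont.and h0))
  set B' : ℝ → Ω → ℝ := fun t ω => if ω ∈ N then 0 else B t ω with hB'def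
  have hgood : ∀ ω ∉ N, Continuous (fun t => B t ω) ∧ B 0 ω = 0 := by
    intro ω hω
    by_contra hc
    exact hω (hNsub hc)
  have hB'eq : ∀ ω ∉ N, ∀ t, B' t ω = B t ω := fun ω hω t => if_neg hω
  have hB'meas : ∀ t, Measurable (B' t) := fun t =>
    Measurable.ite hNmeas measurable_const (hmeas t)
  have hB'cont : ∀ ω, Continuous fun t => B' t ω := by
    intro ω
    by_cases hω : ω ∈ N
    · simpa [hB'def, hω] using continuous_const
    · simpa [hB'def, hω] using (hgood ω hω).1
  have hB'zero : ∀ ω, B' 0 ω = 0 := by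
    intro ω; by_cases hω : ω ∈ N
    · simp [hB'def, hω]
    · simp [hB'def, hω, (hgood ω hω).2]
  have hB'joint : Measurable (Function.uncurry B') :=
    measurable_uncurry_of_continuous_of_measurable hB'cont hB'meas
  have haeN : ∀ᵐ ω ∂μ, ω ∉ N := by
    rw [ae_iff]
    simpa using hNnull
  have hyor_eq : ∀ ω ∉ N, ∀ c : ℝ, yorA B c x ω = yorA B' c x ω := by
    intro ω hω c
    unfold yorA
    congr 1
    funext w
    rw [hB'eq ω hω w]
  -- law of increments of B'
  have hgauss' : ∀ u t : ℝ, 0 ≤ u → u ≤ t →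
      μ.map (fun ω => B' t ω - B' u ω) = gaussianReal 0 ((t - u).toNNReal) := by
    intro u t hu hut
    rw [Measure.map_congr (f := fun ω => B' t ω - B' u ω) (g := fun ω => B t ω - B u ω)
      (by filter_upwards [haeN] with ω hω; rw [hB'eq ω hω, hB'eq ω hω])]
    exact hgauss u t hu hut
  have EE : ∀ (c u t : ℝ), 0 ≤ u → u ≤ t →
      ∫⁻ ω, ENNReal.ofReal (Real.exp (c * (B' t ω - B' u ω))) ∂μ
        = ENNReal.ofReal (Real.exp (c ^ 2 * (t - u) / 2)) := by
    intro c u t hu hut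
    have hg : Measurable fun y : ℝ => ENNReal.ofReal (Real.exp (c * y)) :=
      ENNReal.measurable_ofReal.comp (Real.measurable_exp.comp (measurable_id.const_mul c))
    rw [← lintegral_map (g := fun ω => B' t ω - B' u ω) hg ((hB'meas t).sub (hB'meas u)), hgauss' u t hu hut, gaussLint,
      Real.coe_toNNReal _ (sub_nonneg.mpr hut)]
  -- independence of increments of B'
  have hindep' : ∀ w : ℝ, 0 ≤ w → w ≤ x →
      IndepFun (fun ω => B' w ω - B' 0 ω) (fun ω => B' x ω - B' w ω) μ := by
    intro w hw hwx
    have hmono : Monotone ![(0:ℝ), w, x] := by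
      intro i j hij
      fin_cases i <;> fin_cases j <;>
        simp_all [Fin.le_def] <;> linarith
    have h2 := hindep 2 ![(0:ℝ), w, x] (by intro i; fin_cases i <;> simp <;> linarith) hmono
    have hind := h2.indepFun (show (0 : Fin 2) ≠ 1 by decide)
    have hv10 : (![(0:ℝ), w, x] (Fin.succ 0)) = w := rfl
    have hv00 : (![(0:ℝ), w, x] (Fin.castSucc 0)) = 0 := rfl
    have hv11 : (![(0:ℝ), w, x] (Fin.succ 1)) = x := rfl
    have hv01 : (![(0:ℝ), w, x] (Fin.castSucc 1)) = w := rfl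
    rw [hv10, hv00, hv11, hv01] at hind
    exact hind.congr
      (by filter_upwards [haeN] with ω hω; rw [hB'eq ω hω, hB'eq ω hω])
      (by filter_upwards [haeN] with ω hω; rw [hB'eq ω hω, hB'eq ω hω])
  -- the two one-dimensional expectations
  have E2 : ∀ w ∈ Ioc (0:ℝ) x,
      ∫⁻ ω, ENNReal.ofReal (Real.exp (2 * (B' w ω + 0 * w)) * Real.exp (r * B' x ω)) ∂μ
        = ENNReal.ofReal (Real.exp (2 * w + 2 * r * w + r ^ 2 * x / 2)) := by
    intro w hw
    have hw0 : (0:ℝ) ≤ w := hw.1.le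
    have hwx : w ≤ x := hw.2
    have hm1 : Measurable fun y : ℝ => ENNReal.ofReal (Real.exp ((2 + r) * y)) :=
      ENNReal.measurable_ofReal.comp (Real.measurable_exp.comp (measurable_id.const_mul _))
    have hm2 : Measurable fun y : ℝ => ENNReal.ofReal (Real.exp (r * y)) :=
      ENNReal.measurable_ofReal.comp (Real.measurable_exp.comp (measurable_id.const_mul _))
    have hpt : ∀ ω, Real.exp (2 * (B' w ω + 0 * w)) * Real.exp (r * B' x ω)
        = Real.exp ((2 + r) * (B' w ω - B' 0 ω)) * Real.exp (r * (B' x ω - B' w ω)) := by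
      intro ω
      rw [hB'zero ω, ← Real.exp_add, ← Real.exp_add]
      congr 1
      ring
    calc ∫⁻ ω, ENNReal.ofReal (Real.exp (2 * (B' w ω + 0 * w)) * Real.exp (r * B' x ω)) ∂μ
        = ∫⁻ ω, ENNReal.ofReal (Real.exp ((2 + r) * (B' w ω - B' 0 ω)))
            * ENNReal.ofReal (Real.exp (r * (B' x ω - B' w ω))) ∂μ := by
          refine lintegral_congr fun ω => ?_
          rw [hpt ω, ENNReal.ofReal_mul (Real.exp_pos _).le]
      _ = (∫⁻ ω, ENNReal.ofReal (Real.exp ((2 + r) * (B' w ω - B' 0 ω))) ∂μ)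
            * ∫⁻ ω, ENNReal.ofReal (Real.exp (r * (B' x ω - B' w ω))) ∂μ := by
          refine lintegral_mul_eq_lintegral_mul_lintegral_of_indepFun''
            ((hm1.comp ((hB'meas w).sub (hB'meas 0))).aemeasurable)
            ((hm2.comp ((hB'meas x).sub (hB'meas w))).aemeasurable) ?_
          exact (hindep' w hw0 hwx).comp hm1 hm2
      _ = ENNReal.ofReal (Real.exp ((2 + r) ^ 2 * (w - 0) / 2))
            * ENNReal.ofReal (Real.exp (r ^ 2 * (x - w) / 2)) := by
          rw [EE (2 + r) 0 w le_rfl hw0, EE r w x hw0 hwx]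
      _ = _ := by
          rw [← ENNReal.ofReal_mul (Real.exp_pos _).le, ← Real.exp_add]
          congr 2
          ring
  have E1 : ∀ w ∈ Ioc (0:ℝ) x,
      ∫⁻ ω, ENNReal.ofReal (Real.exp (2 * (B' w ω + r * w))) ∂μ
        = ENNReal.ofReal (Real.exp (2 * w + 2 * r * w)) := by
    intro w hw
    have hw0 : (0:ℝ) ≤ w := hw.1.le
    have hpt : ∀ ω, Real.exp (2 * (B' w ω + r * w))
        = Real.exp (2 * r * w) * Real.exp (2 * (B' w ω - B' 0 ω)) := by
      intro ω
      rw [hB'zero ω, ← Real.exp_add]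
      congr 1
      ring
    calc ∫⁻ ω, ENNReal.ofReal (Real.exp (2 * (B' w ω + r * w))) ∂μ
        = ∫⁻ ω, ENNReal.ofReal (Real.exp (2 * r * w))
            * ENNReal.ofReal (Real.exp (2 * (B' w ω - B' 0 ω))) ∂μ := by
          refine lintegral_congr fun ω => ?_
          rw [hpt ω, ENNReal.ofReal_mul (Real.exp_pos _).le]
      _ = ENNReal.ofReal (Real.exp (2 * r * w))
            * ∫⁻ ω, ENNReal.ofReal (Real.exp (2 * (B' w ω - B' 0 ω))) ∂μ := by
          refine lintegral_const_mul _ ?_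
          exact ((ENNReal.measurable_ofReal.comp
            (Real.measurable_exp.comp (measurable_id.const_mul _))).comp
            ((hB'meas w).sub (hB'meas 0)))
      _ = ENNReal.ofReal (Real.exp (2 * r * w))
            * ENNReal.ofReal (Real.exp (2 ^ 2 * (w - 0) / 2)) := by
          rw [EE 2 0 w le_rfl hw0]
      _ = _ := by
          rw [← ENNReal.ofReal_mul (Real.exp_pos _).le, ← Real.exp_add]
          congr 2
          ring
  -- Tonelli helper
  have hswap : ∀ F : ℝ → Ω → ℝ≥0∞, Measurable (Function.uncurry F) →
      ∫⁻ ω, (∫⁻ w in Ioc (0:ℝ) x, F w ω) ∂μ = ∫⁻ w in Ioc (0:ℝ) x, ∫⁻ ω, F w ω ∂μ := by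
    intro F hF
    exact lintegral_lintegral_swap ((hF.comp measurable_swap).aemeasurable)
  -- path continuity/measurability helpers
  have hcw : ∀ (c : ℝ) ω, Continuous fun w => Real.exp (2 * (B' w ω + c * w)) := fun c ω =>
    Real.continuous_exp.comp
      (continuous_const.mul ((hB'cont ω).add (continuous_const.mul continuous_id)))
  have hmw : ∀ (c : ℝ) ω, Measurable fun w => ENNReal.ofReal (Real.exp (2 * (B' w ω + c * w))) :=
    fun c ω => (hcw c ω).measurable.ennreal_ofReal
  have hjointc : ∀ c : ℝ, Measurable (Function.uncurry fun w ω =>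
      ENNReal.ofReal (Real.exp (2 * (B' w ω + c * w)))) := by
    intro c
    refine ENNReal.measurable_ofReal.comp (Real.measurable_exp.comp ?_)
    refine Measurable.const_mul ?_ 2
    exact hB'joint.add (measurable_fst.const_mul c)
  -- yorA as a lintegral
  have hyor_ofReal : ∀ (c : ℝ) ω, ENNReal.ofReal (yorA B' c x ω)
      = ∫⁻ w in Ioc (0:ℝ) x, ENNReal.ofReal (Real.exp (2 * (B' w ω + c * w))) := by
    intro c ω
    unfold yorA
    rw [ofReal_integral_eq_lintegral_ofReal]
    · exact (hcw c ω).integrableOn_Ioc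
    · exact ae_of_all _ fun w => (Real.exp_pos _).le
  have hyor_nonneg : ∀ (c : ℝ) ω, 0 ≤ yorA B' c x ω := by
    intro c ω
    exact setIntegral_nonneg measurableSet_Ioc fun w _ => (Real.exp_pos _).le
  -- the constant K
  set K : ℝ := ∫ w in Ioc (0:ℝ) x, Real.exp (2 * w + 2 * r * w) with hKdef
  have hK0 : 0 ≤ K := setIntegral_nonneg measurableSet_Ioc fun w _ => (Real.exp_pos _).le
  have hKlint : ∫⁻ w in Ioc (0:ℝ) x, ENNReal.ofReal (Real.exp (2 * w + 2 * r * w))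
      = ENNReal.ofReal K := by
    rw [hKdef, ofReal_integral_eq_lintegral_ofReal]
    · exact (Real.continuous_exp.comp ((continuous_const.mul continuous_id).add
        (continuous_const.mul continuous_id))).integrableOn_Ioc
    · exact ae_of_all _ fun w => (Real.exp_pos _).le
  -- main lintegral computation, LHS side
  have hT : ∫⁻ ω, ENNReal.ofReal (yorA B' 0 x ω * Real.exp (r * B' x ω)) ∂μ
      = ENNReal.ofReal (Real.exp (r ^ 2 * x / 2)) * ENNReal.ofReal K := by
    have hFmeas : Measurable (Function.uncurry fun w ω =>
        ENNReal.ofReal (Real.exp (2 * (B' w ω + 0 * w)))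
          * ENNReal.ofReal (Real.exp (r * B' x ω))) := by
      refine (hjointc 0).mul ?_
      exact ENNReal.measurable_ofReal.comp
        (Real.measurable_exp.comp (((hB'meas x).comp measurable_snd).const_mul r))
    calc ∫⁻ ω, ENNReal.ofReal (yorA B' 0 x ω * Real.exp (r * B' x ω)) ∂μ
        = ∫⁻ ω, (∫⁻ w in Ioc (0:ℝ) x,
            ENNReal.ofReal (Real.exp (2 * (B' w ω + 0 * w)))
              * ENNReal.ofReal (Real.exp (r * B' x ω))) ∂μ := by
          refine lintegral_congr fun ω => ?_
          rw [ENNReal.ofReal_mul (hyor_nonneg 0 ω), hyor_ofReal 0 ω,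
            ← lintegral_mul_const _ (hmw 0 ω)]
      _ = ∫⁻ w in Ioc (0:ℝ) x, ∫⁻ ω,
            ENNReal.ofReal (Real.exp (2 * (B' w ω + 0 * w)))
              * ENNReal.ofReal (Real.exp (r * B' x ω)) ∂μ := hswap _ hFmeas
      _ = ∫⁻ w in Ioc (0:ℝ) x,
            ENNReal.ofReal (Real.exp (r ^ 2 * x / 2))
              * ENNReal.ofReal (Real.exp (2 * w + 2 * r * w)) := by
          refine setLIntegral_congr_fun measurableSet_Ioc (fun w hw => ?_)
          calc ∫⁻ ω, ENNReal.ofReal (Real.exp (2 * (B' w ω + 0 * w)))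
                * ENNReal.ofReal (Real.exp (r * B' x ω)) ∂μ
              = ∫⁻ ω, ENNReal.ofReal
                  (Real.exp (2 * (B' w ω + 0 * w)) * Real.exp (r * B' x ω)) ∂μ := by
                refine lintegral_congr fun ω => ?_
                rw [ENNReal.ofReal_mul (Real.exp_pos _).le]
            _ = ENNReal.ofReal (Real.exp (2 * w + 2 * r * w + r ^ 2 * x / 2)) := E2 w hw
            _ = ENNReal.ofReal (Real.exp (r ^ 2 * x / 2))
                  * ENNReal.ofReal (Real.exp (2 * w + 2 * r * w)) := by
                rw [← ENNReal.ofReal_mul (Real.exp_pos _).le, ← Real.exp_add]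
                congr 2
                ring
      _ = ENNReal.ofReal (Real.exp (r ^ 2 * x / 2)) * ENNReal.ofReal K := by
          rw [lintegral_const_mul _ (by fun_prop), hKlint]
  -- RHS lintegral computation
  have hTR : ∫⁻ ω, ENNReal.ofReal (yorA B' r x ω) ∂μ = ENNReal.ofReal K := by
    calc ∫⁻ ω, ENNReal.ofReal (yorA B' r x ω) ∂μ
        = ∫⁻ ω, (∫⁻ w in Ioc (0:ℝ) x,
            ENNReal.ofReal (Real.exp (2 * (B' w ω + r * w)))) ∂μ := by
          exact lintegral_congr fun ω => hyor_ofReal r ω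
      _ = ∫⁻ w in Ioc (0:ℝ) x, ∫⁻ ω,
            ENNReal.ofReal (Real.exp (2 * (B' w ω + r * w))) ∂μ := hswap _ (hjointc r)
      _ = ∫⁻ w in Ioc (0:ℝ) x, ENNReal.ofReal (Real.exp (2 * w + 2 * r * w)) :=
          setLIntegral_congr_fun measurableSet_Ioc (fun w hw => E1 w hw)
      _ = ENNReal.ofReal K := hKlint
  -- RHS value
  have hyorA_strmeas : AEStronglyMeasurable (fun ω => yorA B' r x ω) μ := by
    have : StronglyMeasurable fun ω => ∫ w,
        Real.exp (2 * (B' w ω + r * w)) ∂(volume.restrict (Ioc (0:ℝ) x)) := by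
      refine StronglyMeasurable.integral_prod_right ?_
      refine Measurable.stronglyMeasurable ?_
      refine Real.measurable_exp.comp ?_
      refine Measurable.const_mul ?_ 2
      exact ((hB'joint.comp measurable_swap).add (measurable_snd.const_mul r))
    exact this.aestronglyMeasurable
  have hRHSval : ∫ ω, yorA B' r x ω ∂μ = K := by
    rw [integral_eq_lintegral_of_nonneg_ae (ae_of_all _ fun ω => hyor_nonneg r ω)
      hyorA_strmeas, hTR, ENNReal.toReal_ofReal hK0]
  -- now the complex estimate
  set I : ℂ := ∫ ω, (↑(max (yorA B' 0 x ω - a) 0) : ℂ) * Complex.exp (ν * B' x ω) ∂μ with hIdef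
  have hIcongr : (∫ ω, (↑(max (yorA B 0 x ω - a) 0) : ℂ) * Complex.exp (ν * B x ω) ∂μ) = I := by
    refine integral_congr_ae ?_
    filter_upwards [haeN] with ω hω
    rw [hyor_eq ω hω 0, hB'eq ω hω x]
  have hnorm_pt : ∀ ω, ‖(↑(max (yorA B' 0 x ω - a) 0) : ℂ) * Complex.exp (ν * B' x ω)‖
      = max (yorA B' 0 x ω - a) 0 * Real.exp (r * B' x ω) := by
    intro ω
    rw [norm_mul, Complex.norm_real, Real.norm_eq_abs,
      abs_of_nonneg (le_max_right _ _), Complex.norm_exp]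
    congr 2
    simp [Complex.mul_re, hrdef]
  have hIbound : ‖I‖ ≤ Real.exp (r ^ 2 * x / 2) * K := by
    have h1 : ‖I‖ ≤ (∫⁻ ω, ENNReal.ofReal
        (max (yorA B' 0 x ω - a) 0 * Real.exp (r * B' x ω)) ∂μ).toReal := by
      refine le_trans (norm_integral_le_lintegral_norm _) ?_
      refine le_of_eq ?_
      congr 1
      exact lintegral_congr fun ω => by rw [hnorm_pt ω]
    have h2 : (∫⁻ ω, ENNReal.ofReal
          (max (yorA B' 0 x ω - a) 0 * Real.exp (r * B' x ω)) ∂μ)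
        ≤ ∫⁻ ω, ENNReal.ofReal (yorA B' 0 x ω * Real.exp (r * B' x ω)) ∂μ := by
      refine lintegral_mono fun ω => ENNReal.ofReal_le_ofReal ?_
      refine mul_le_mul_of_nonneg_right ?_ (Real.exp_pos _).le
      exact max_le (sub_le_self _ ha.le) (hyor_nonneg 0 ω)
    calc ‖I‖ ≤ (∫⁻ ω, ENNReal.ofReal
            (max (yorA B' 0 x ω - a) 0 * Real.exp (r * B' x ω)) ∂μ).toReal := h1
      _ ≤ (ENNReal.ofReal (Real.exp (r ^ 2 * x / 2)) * ENNReal.ofReal K).toReal := by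
          refine ENNReal.toReal_mono ?_ (le_trans h2 (le_of_eq hT))
          exact ENNReal.mul_ne_top ENNReal.ofReal_ne_top ENNReal.ofReal_ne_top
      _ = Real.exp (r ^ 2 * x / 2) * K := by
          rw [ENNReal.toReal_mul, ENNReal.toReal_ofReal (Real.exp_pos _).le,
            ENNReal.toReal_ofReal hK0]
  -- assemble
  have hRHS : (∫ ω, yorA B r x ω ∂μ) = K := by
    rw [← hRHSval]
    refine integral_congr_ae ?_
    filter_upwards [haeN] with ω hω
    exact hyor_eq ω hω r
  have hre : (-(x : ℂ) * ν ^ 2 / 2).re = x * si ^ 2 / 2 - x * r ^ 2 / 2 := by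
    simp [pow_two, Complex.mul_re, Complex.div_re, Complex.normSq, hrdef, hsdef]
    ring
  rw [hIcongr, hRHS, norm_mul, Complex.norm_exp, hre]
  calc Real.exp (x * si ^ 2 / 2 - x * r ^ 2 / 2) * ‖I‖
      ≤ Real.exp (x * si ^ 2 / 2 - x * r ^ 2 / 2) * (Real.exp (r ^ 2 * x / 2) * K) :=
        mul_le_mul_of_nonneg_left hIbound (Real.exp_pos _).le
    _ = Real.exp (x / 2 * si ^ 2) * K := by
        rw [← mul_assoc, ← Real.exp_add]
        congr 2
        ring


end
end
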